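/- arXiv:1909.03145 — 10 statements merged into one kernel-verified Lean document; each statement's English description precedes it below -/
import Mathlib

section
/- Let A be a d×d real symmetric positive definite matrix with smallest eigenvalue μ > 0 and largest eigenvalue L, and condition number κ(A) = L/μ. Define the 2d×2d block matrices G_HB = [[0, I], [−A/μ, −2I]] and G_NAG = [[−I, I], [I − A/μ, −I]]. Then every complex eigenvalue λ of G_HB and every complex eigenvalue λ of G_NAG satisfies Re(λ) < 0, and moreover κ(G_HB) = κ(G_NAG) = √(κ(A)). -/
open Matrix

/-- Spectral radius of a real square matrix: maximum modulus of its complex eigenvalues. -/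
noncomputable def specRad {n : Type*} [Fintype n] [DecidableEq n] (M : Matrix n n ℝ) : ℝ :=
  sSup {r : ℝ | ∃ z ∈ spectrum ℂ (M.map Complex.ofReal), r = ‖z‖}

/-- Condition number κ(M) = ρ(M⁻¹)·ρ(M). -/
noncomputable def condNumber {n : Type*} [Fintype n] [DecidableEq n]
    (M : Matrix n n ℝ) : ℝ :=
  specRad M⁻¹ * specRad M

namespace StmtAux

variable {d : ℕ}

/-- det of `w•1 - M.map ofReal` for a real hermitian matrix is the product over eigenvalues. -/
lemma det_char (M : Matrix (Fin d) (Fin d) ℝ) (hM : M.IsHermitian) (w : ℂ) :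
    (w • (1 : Matrix (Fin d) (Fin d) ℂ) - M.map Complex.ofReal).det
      = ∏ i, (w - (hM.eigenvalues i : ℂ)) := by
  set U : Matrix (Fin d) (Fin d) ℝ := (hM.eigenvectorUnitary : Matrix (Fin d) (Fin d) ℝ)
  have hUU : U * star U = 1 := Matrix.mem_unitaryGroup_iff.mp hM.eigenvectorUnitary.2
  set Uc : Matrix (Fin d) (Fin d) ℂ := U.map Complex.ofReal
  set Vc : Matrix (Fin d) (Fin d) ℂ := (star U).map Complex.ofReal
  have hmapmul : ∀ X Y : Matrix (Fin d) (Fin d) ℝ,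
      (X * Y).map Complex.ofReal = X.map Complex.ofReal * Y.map Complex.ofReal := by
    intro X Y
    exact Matrix.map_mul (f := Complex.ofRealHom)
  have hUVc : Uc * Vc = 1 := by
    rw [← hmapmul, hUU]
    simp [Matrix.map_one (f := Complex.ofReal) rfl rfl]
  have hMspec : M = U * Matrix.diagonal (RCLike.ofReal ∘ hM.eigenvalues) * star U :=
    hM.spectral_theorem
  have hdiag : (Matrix.diagonal (RCLike.ofReal ∘ hM.eigenvalues)).map Complex.ofReal
      = Matrix.diagonal (fun i => (hM.eigenvalues i : ℂ)) := by
    rw [Matrix.diagonal_map (by simp)]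
    congr 1
  have hMc : M.map Complex.ofReal
      = Uc * Matrix.diagonal (fun i => (hM.eigenvalues i : ℂ)) * Vc := by
    conv_lhs => rw [hMspec]
    rw [hmapmul, hmapmul, hdiag]
  have hone : w • (1 : Matrix (Fin d) (Fin d) ℂ) = Uc * (w • 1) * Vc := by
    rw [Matrix.mul_smul, Matrix.mul_one, Matrix.smul_mul, hUVc]
  rw [hMc, hone, ← Matrix.sub_mul, ← Matrix.mul_sub,
    Matrix.det_mul_right_comm, hUVc, Matrix.one_mul]
  have : w • (1 : Matrix (Fin d) (Fin d) ℂ) - Matrix.diagonal (fun i => (hM.eigenvalues i : ℂ))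
      = Matrix.diagonal (fun i => w - (hM.eigenvalues i : ℂ)) := by
    ext i j
    rcases eq_or_ne i j with h | h <;>
      simp [Matrix.sub_apply, Matrix.smul_apply, Matrix.one_apply, Matrix.diagonal_apply, h]
  rw [this, Matrix.det_diagonal]

lemma mem_spectrum_iff_det {n : Type*} [Fintype n] [DecidableEq n] (N : Matrix n n ℂ) (z : ℂ) :
    z ∈ spectrum ℂ N ↔ (z • (1 : Matrix n n ℂ) - N).det = 0 := by
  rw [spectrum.mem_iff, Algebra.algebraMap_eq_smul_one]
  simp [Matrix.isUnit_iff_isUnit_det, isUnit_iff_ne_zero, not_not]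

lemma mem_spectrum_map_iff (M : Matrix (Fin d) (Fin d) ℝ) (hM : M.IsHermitian) (w : ℂ) :
    w ∈ spectrum ℂ (M.map Complex.ofReal) ↔ ∃ i, w = (hM.eigenvalues i : ℂ) := by
  rw [mem_spectrum_iff_det, det_char M hM, Finset.prod_eq_zero_iff]
  simp [sub_eq_zero]

lemma real_spectrum_exists (M : Matrix (Fin d) (Fin d) ℝ) (hM : M.IsHermitian) {x : ℝ}
    (hx : x ∈ spectrum ℝ M) : ∃ i, x = hM.eigenvalues i := by
  have hdR : (x • (1 : Matrix (Fin d) (Fin d) ℝ) - M).det = 0 := by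
    have h := spectrum.mem_iff.mp hx
    rw [Algebra.algebraMap_eq_smul_one] at h
    by_contra hne
    exact h ((Matrix.isUnit_iff_isUnit_det _).mpr (isUnit_iff_ne_zero.mpr hne))
  have hmap : (x • (1 : Matrix (Fin d) (Fin d) ℝ) - M).map Complex.ofReal
      = (x : ℂ) • (1 : Matrix (Fin d) (Fin d) ℂ) - M.map Complex.ofReal := by
    ext i j
    rcases eq_or_ne i j with h | h <;>
      simp [Matrix.sub_apply, Matrix.smul_apply, Matrix.one_apply, h]
  have h1 : ((x : ℂ)) ∈ spectrum ℂ (M.map Complex.ofReal) := by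
    rw [mem_spectrum_iff_det, ← hmap]
    rw [show ((x • (1 : Matrix (Fin d) (Fin d) ℝ) - M).map Complex.ofReal).det
        = (((x • (1 : Matrix (Fin d) (Fin d) ℝ) - M).det : ℝ) : ℂ) from
      (RingHom.map_det Complex.ofRealHom _).symm, hdR]
    simp
  obtain ⟨i, hi⟩ := (mem_spectrum_map_iff M hM _).mp h1
  exact ⟨i, by exact_mod_cast hi⟩

lemma det_blocks1 (M : Matrix (Fin d) (Fin d) ℂ) (c z : ℂ) (hc : c ≠ 0) :
    (Matrix.fromBlocks (z • 1) (-1) M (c • 1)).det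
      = ((c * z) • (1 : Matrix (Fin d) (Fin d) ℂ) + M).det := by
  letI : Invertible (c • (1 : Matrix (Fin d) (Fin d) ℂ)) :=
    ⟨c⁻¹ • 1,
      by rw [Matrix.smul_mul, Matrix.mul_smul, Matrix.mul_one, smul_smul, inv_mul_cancel₀ hc,
        one_smul],
      by rw [Matrix.smul_mul, Matrix.mul_smul, Matrix.mul_one, smul_smul, mul_inv_cancel₀ hc,
        one_smul]⟩
  rw [Matrix.det_fromBlocks₂₂]
  have hinv : ⅟(c • (1 : Matrix (Fin d) (Fin d) ℂ)) = c⁻¹ • 1 := rfl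
  rw [hinv, Matrix.det_smul, Matrix.det_one, mul_one]
  have h1 : (z • (1 : Matrix (Fin d) (Fin d) ℂ) - (-1) * (c⁻¹ • 1) * M)
      = z • 1 + c⁻¹ • M := by
    rw [Matrix.neg_mul, Matrix.one_mul, Matrix.neg_mul, Matrix.smul_mul, Matrix.one_mul,
      sub_neg_eq_add]
  rw [h1, ← Matrix.det_smul]
  congr 1
  rw [smul_add, smul_smul, smul_smul, mul_inv_cancel₀ hc, one_smul]

lemma key1 (M : Matrix (Fin d) (Fin d) ℂ) (z : ℂ) :
    (Matrix.fromBlocks (z • 1) (-1) M ((z + 2) • 1)).det = 0 ↔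
      ((z * (z + 2)) • (1 : Matrix (Fin d) (Fin d) ℂ) + M).det = 0 := by
  rcases eq_or_ne (z + 2) 0 with h | h
  · have hz : z = -2 := by linear_combination h
    subst hz
    rw [h, zero_smul]
    letI : Invertible ((-2 : ℂ) • (1 : Matrix (Fin d) (Fin d) ℂ)) :=
      ⟨(-2 : ℂ)⁻¹ • 1,
        by rw [Matrix.smul_mul, Matrix.mul_smul, Matrix.mul_one, smul_smul,
          inv_mul_cancel₀ (by norm_num : (-2:ℂ) ≠ 0), one_smul],
        by rw [Matrix.smul_mul, Matrix.mul_smul, Matrix.mul_one, smul_smul,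
          mul_inv_cancel₀ (by norm_num : (-2:ℂ) ≠ 0), one_smul]⟩
    rw [Matrix.det_fromBlocks₁₁]
    have hinv : ⅟((-2 : ℂ) • (1 : Matrix (Fin d) (Fin d) ℂ)) = (-2 : ℂ)⁻¹ • 1 := rfl
    rw [hinv, Matrix.det_smul, Matrix.det_one, mul_one]
    have h1 : ((0 : Matrix (Fin d) (Fin d) ℂ) - M * ((-2 : ℂ)⁻¹ • 1) * (-1))
        = (-2 : ℂ)⁻¹ • M := by
      rw [Matrix.mul_neg, Matrix.mul_one, Matrix.mul_smul, Matrix.mul_one, sub_neg_eq_add,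
        zero_add]
    rw [h1, Matrix.det_smul]
    have h3 : ((-2 : ℂ) * 0) • (1 : Matrix (Fin d) (Fin d) ℂ) + M = M := by norm_num
    rw [h3, mul_eq_zero, mul_eq_zero]
    have hA : ((-2 : ℂ)) ^ Fintype.card (Fin d) ≠ 0 := pow_ne_zero _ (by norm_num)
    have hB : ((-2 : ℂ)⁻¹) ^ Fintype.card (Fin d) ≠ 0 := pow_ne_zero _ (by norm_num)
    tauto
  · rw [det_blocks1 M (z + 2) z h, mul_comm]

lemma key2 (M : Matrix (Fin d) (Fin d) ℂ) (w : ℂ) :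
    (Matrix.fromBlocks (w • 1) (-1) M (w • 1)).det = 0 ↔
      ((w * w) • (1 : Matrix (Fin d) (Fin d) ℂ) + M).det = 0 := by
  rcases eq_or_ne w 0 with h | h
  · subst h
    rw [zero_smul, zero_mul, zero_smul, zero_add]
    set N : Matrix (Fin d ⊕ Fin d) (Fin d ⊕ Fin d) ℂ := Matrix.fromBlocks 0 (-1) M 0 with hN
    have hsq : N * N = Matrix.fromBlocks (-M) 0 0 (-M) := by
      rw [hN, Matrix.fromBlocks_multiply]
      simp
    have hdd : N.det * N.det = (-M).det * (-M).det := by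
      rw [← Matrix.det_mul, hsq, Matrix.det_fromBlocks_zero₂₁]
    have hnm : (-M).det = 0 ↔ M.det = 0 := by
      rw [Matrix.det_neg]
      simp
    constructor
    · intro hh
      have : (-M).det * (-M).det = 0 := by rw [← hdd, hh, mul_zero]
      exact hnm.mp (mul_self_eq_zero.mp this)
    · intro hh
      have : N.det * N.det = 0 := by rw [hdd, hnm.mpr hh, mul_zero]
      exact mul_self_eq_zero.mp this
  · rw [det_blocks1 M w w h]

lemma det_shift (M : Matrix (Fin d) (Fin d) ℂ) (c : ℂ) :
    (c • (1 : Matrix (Fin d) (Fin d) ℂ) + M).det = 0 ↔ (-c) ∈ spectrum ℂ M := by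
  rw [mem_spectrum_iff_det]
  have h1 : (-c) • (1 : Matrix (Fin d) (Fin d) ℂ) - M = -(c • 1 + M) := by
    rw [neg_smul]
    abel
  rw [h1, Matrix.det_neg]
  simp

lemma map_zero' {n : Type*} [Fintype n] [DecidableEq n] :
    (0 : Matrix n n ℝ).map Complex.ofReal = 0 := by
  ext i j; simp

lemma map_one' {n : Type*} [Fintype n] [DecidableEq n] :
    (1 : Matrix n n ℝ).map Complex.ofReal = 1 := by
  ext i j; rcases eq_or_ne i j with h | h <;> simp [Matrix.one_apply, h]

lemma map_neg' (B : Matrix (Fin d) (Fin d) ℝ) :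
    (-B).map Complex.ofReal = -(B.map Complex.ofReal) := by
  ext i j; simp

lemma map_neg_two : ((-2 : Matrix (Fin d) (Fin d) ℝ)).map Complex.ofReal
    = (-2 : Matrix (Fin d) (Fin d) ℂ) := by
  ext i j
  rcases eq_or_ne i j with h | h <;>
    simp [Matrix.map_apply, ← Matrix.diagonal_ofNat, Matrix.diagonal_apply, h]

lemma map_neg_one : ((-1 : Matrix (Fin d) (Fin d) ℝ)).map Complex.ofReal
    = (-1 : Matrix (Fin d) (Fin d) ℂ) := by
  rw [map_neg', map_one']

lemma map_one_sub (B : Matrix (Fin d) (Fin d) ℝ) :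
    ((1 - B : Matrix (Fin d) (Fin d) ℝ)).map Complex.ofReal
      = 1 - B.map Complex.ofReal := by
  ext i j; rcases eq_or_ne i j with h | h <;> simp [Matrix.one_apply, h]

lemma map_GHB (B : Matrix (Fin d) (Fin d) ℝ) :
    (Matrix.fromBlocks 0 1 (-B) (-2) : Matrix (Fin d ⊕ Fin d) (Fin d ⊕ Fin d) ℝ).map
        Complex.ofReal
      = Matrix.fromBlocks 0 1 (-(B.map Complex.ofReal)) (-2) := by
  rw [Matrix.fromBlocks_map, map_zero', map_one', map_neg', map_neg_two]

lemma map_GNAG (B : Matrix (Fin d) (Fin d) ℝ) :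
    (Matrix.fromBlocks (-1) 1 (1 - B) (-1) : Matrix (Fin d ⊕ Fin d) (Fin d ⊕ Fin d) ℝ).map
        Complex.ofReal
      = Matrix.fromBlocks (-1) 1 (1 - B.map Complex.ofReal) (-1) := by
  rw [Matrix.fromBlocks_map, map_one', map_neg_one, map_one_sub]

lemma two_smul_one : ((2 : ℂ) • (1 : Matrix (Fin d) (Fin d) ℂ)) = 2 := by
  rw [← Algebra.algebraMap_eq_smul_one]
  exact map_ofNat (algebraMap ℂ (Matrix (Fin d) (Fin d) ℂ)) 2

lemma sub_GHB (Bc : Matrix (Fin d) (Fin d) ℂ) (z : ℂ) :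
    z • (1 : Matrix (Fin d ⊕ Fin d) (Fin d ⊕ Fin d) ℂ) - Matrix.fromBlocks 0 1 (-Bc) (-2)
      = Matrix.fromBlocks (z • 1) (-1) Bc ((z + 2) • 1) := by
  rw [← Matrix.fromBlocks_one, Matrix.fromBlocks_smul, sub_eq_add_neg, Matrix.fromBlocks_neg,
    Matrix.fromBlocks_add]
  have e1 : z • (1 : Matrix (Fin d) (Fin d) ℂ) + -0 = z • 1 := by rw [neg_zero, add_zero]
  have e2 : z • (0 : Matrix (Fin d) (Fin d) ℂ) + -1 = -1 := by rw [smul_zero, zero_add]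
  have e3 : z • (0 : Matrix (Fin d) (Fin d) ℂ) + - -Bc = Bc := by
    rw [smul_zero, zero_add, neg_neg]
  have e4 : z • (1 : Matrix (Fin d) (Fin d) ℂ) + - -2 = (z + 2) • 1 := by
    rw [neg_neg, add_smul, two_smul_one]
  rw [e1, e2, e3, e4]

lemma sub_GNAG (Bc : Matrix (Fin d) (Fin d) ℂ) (z : ℂ) :
    z • (1 : Matrix (Fin d ⊕ Fin d) (Fin d ⊕ Fin d) ℂ)
        - Matrix.fromBlocks (-1) 1 (1 - Bc) (-1)
      = Matrix.fromBlocks ((z + 1) • 1) (-1) (Bc - 1) ((z + 1) • 1) := by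
  rw [← Matrix.fromBlocks_one, Matrix.fromBlocks_smul, sub_eq_add_neg, Matrix.fromBlocks_neg,
    Matrix.fromBlocks_add]
  have e1 : z • (1 : Matrix (Fin d) (Fin d) ℂ) + - -1 = (z + 1) • 1 := by
    rw [neg_neg, add_smul, one_smul]
  have e2 : z • (0 : Matrix (Fin d) (Fin d) ℂ) + -1 = -1 := by rw [smul_zero, zero_add]
  have e3 : z • (0 : Matrix (Fin d) (Fin d) ℂ) + -(1 - Bc) = Bc - 1 := by
    rw [smul_zero, zero_add, neg_sub]
  rw [e1, e2, e3]

-- quadratic analysis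
lemma quad_props {b : ℝ} (hb : 1 ≤ b) {z : ℂ} (hz : z ^ 2 + 2 * z + (b : ℂ) = 0) :
    z.re = -1 ∧ ‖z‖ = Real.sqrt b := by
  have hre : (z.re + 1) ^ 2 - z.im ^ 2 = 1 - b := by
    have := congrArg Complex.re hz
    simp [Complex.add_re, Complex.mul_re, Complex.mul_im, pow_two] at this
    nlinarith [this]
  have him : (z.re + 1) * z.im = 0 := by
    have := congrArg Complex.im hz
    simp [Complex.add_im, Complex.mul_re, Complex.mul_im, pow_two] at this
    nlinarith [this]
  have hre1 : z.re = -1 := by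
    rcases mul_eq_zero.mp him with h | h
    · linarith
    · have : (z.re + 1) ^ 2 = 1 - b := by rw [← hre, h]; ring
      nlinarith [sq_nonneg (z.re + 1)]
  have him2 : z.im ^ 2 = b - 1 := by
    rw [hre1] at hre; nlinarith [hre]
  refine ⟨hre1, ?_⟩
  rw [Complex.norm_def, Complex.normSq_apply]
  congr 1
  rw [hre1]
  nlinarith [him2]

lemma quad_exists {b : ℝ} (hb : 1 ≤ b) :
    ∃ z : ℂ, z ^ 2 + 2 * z + (b : ℂ) = 0 := by
  refine ⟨-1 + Complex.I * (Real.sqrt (b - 1) : ℂ), ?_⟩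
  have hs : ((Real.sqrt (b - 1) : ℝ) : ℂ) ^ 2 = (b : ℂ) - 1 := by
    rw [← Complex.ofReal_pow, Real.sq_sqrt (by linarith)]
    push_cast; ring
  linear_combination Complex.I ^ 2 * hs + ((b : ℂ) - 1) * Complex.I_sq

lemma main_of_spec (G : Matrix (Fin d ⊕ Fin d) (Fin d ⊕ Fin d) ℝ) (ev : Fin d → ℝ) (κ : ℝ)
    (hchar : ∀ z : ℂ, z ∈ spectrum ℂ (G.map Complex.ofReal) ↔
      ∃ i, z ^ 2 + 2 * z + (ev i : ℂ) = 0)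
    (hev1 : ∀ i, 1 ≤ ev i) (hevκ : ∀ i, ev i ≤ κ)
    (h1 : ∃ i, ev i = 1) (hκ : ∃ i, ev i = κ) :
    (∀ z ∈ spectrum ℂ (G.map Complex.ofReal), z.re < 0) ∧ condNumber G = Real.sqrt κ := by
  have hre : ∀ z ∈ spectrum ℂ (G.map Complex.ofReal), z.re < 0 := by
    intro z hz
    obtain ⟨i, hi⟩ := (hchar z).mp hz
    have := (quad_props (hev1 i) hi).1
    rw [this]; norm_num
  refine ⟨hre, ?_⟩
  -- spectral radius of G
  have hradG : specRad G = Real.sqrt κ := by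
    apply IsGreatest.csSup_eq
    constructor
    · obtain ⟨i, hi⟩ := hκ
      obtain ⟨z, hz⟩ := quad_exists (hev1 i)
      refine ⟨z, (hchar z).mpr ⟨i, hz⟩, ?_⟩
      rw [(quad_props (hev1 i) hz).2, hi]
    · rintro r ⟨z, hz, rfl⟩
      obtain ⟨i, hi⟩ := (hchar z).mp hz
      rw [(quad_props (hev1 i) hi).2]
      exact Real.sqrt_le_sqrt (hevκ i)
  -- zero not in spectrum
  have h0 : (0 : ℂ) ∉ spectrum ℂ (G.map Complex.ofReal) := by
    intro hmem
    obtain ⟨i, hi⟩ := (hchar 0).mp hmem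
    have : (ev i : ℂ) = 0 := by linear_combination hi
    have : ev i = 0 := by exact_mod_cast this
    linarith [hev1 i]
  have hUnit : IsUnit (G.map Complex.ofReal) := spectrum.zero_notMem_iff ℂ |>.mp h0
  obtain ⟨u, hu⟩ := hUnit
  -- G is invertible over ℝ
  have hdetG : IsUnit G.det := by
    apply isUnit_iff_ne_zero.mpr
    intro hdet
    have : (G.map Complex.ofReal).det = 0 := by
      have hh : (G.map Complex.ofReal).det = ((G.det : ℝ) : ℂ) :=
        (RingHom.map_det Complex.ofRealHom G).symm
      rw [hh, hdet]
      simp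
    have hU : IsUnit (G.map Complex.ofReal).det :=
      (Matrix.isUnit_iff_isUnit_det _).mp ⟨u, hu⟩
    rw [this] at hU
    exact (isUnit_iff_ne_zero.mp hU) rfl
  have hmapinv : (G⁻¹).map Complex.ofReal = ↑u⁻¹ := by
    refine (Units.inv_eq_of_mul_eq_one_left ?_).symm
    have hmm : (G⁻¹ * G).map Complex.ofReal
        = (G⁻¹).map Complex.ofReal * G.map Complex.ofReal :=
      Matrix.map_mul (f := Complex.ofRealHom)
    rw [hu, ← hmm, Matrix.nonsing_inv_mul G hdetG]
    exact map_one'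
  have hspecinv : spectrum ℂ ((G⁻¹).map Complex.ofReal)
      = (spectrum ℂ (G.map Complex.ofReal))⁻¹ := by
    rw [hmapinv, ← spectrum.map_inv u, hu]
  have hradInv : specRad G⁻¹ = 1 := by
    apply IsGreatest.csSup_eq
    constructor
    · obtain ⟨i, hi⟩ := h1
      refine ⟨-1, ?_, by simp⟩
      rw [hspecinv, Set.mem_inv]
      apply (hchar _).mpr
      exact ⟨i, by rw [hi]; norm_num⟩
    · rintro r ⟨y, hy, rfl⟩
      rw [hspecinv, Set.mem_inv] at hy
      obtain ⟨i, hi⟩ := (hchar _).mp hy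
      have hyne : y ≠ 0 := by
        intro h
        rw [h, inv_zero (G₀ := ℂ)] at hy
        exact h0 hy
      have habs : ‖y⁻¹‖ = Real.sqrt (ev i) := (quad_props (hev1 i) hi).2
      have h1le : 1 ≤ Real.sqrt (ev i) := Real.one_le_sqrt.mpr (hev1 i)
      have : ‖y‖ = (Real.sqrt (ev i))⁻¹ := by
        rw [← habs, norm_inv, inv_inv]
      rw [this]
      exact inv_le_one_of_one_le₀ h1le
  rw [condNumber, hradG, hradInv, one_mul]

end StmtAux

theorem stmt0 {d : ℕ} (A : Matrix (Fin d) (Fin d) ℝ) (μ L : ℝ)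
    (hA : A.IsSymm) (hApd : A.PosDef)
    (hμspec : μ ∈ spectrum ℝ A) (hLspec : L ∈ spectrum ℝ A)
    (hbound : ∀ lam ∈ spectrum ℝ A, μ ≤ lam ∧ lam ≤ L)
    (hμpos : 0 < μ)
    (GHB GNAG : Matrix (Fin d ⊕ Fin d) (Fin d ⊕ Fin d) ℝ)
    (hGHB : GHB = Matrix.fromBlocks 0 1 (-(μ⁻¹ • A)) (-2))
    (hGNAG : GNAG = Matrix.fromBlocks (-1) 1 (1 - μ⁻¹ • A) (-1)) :
    (∀ z ∈ spectrum ℂ (GHB.map Complex.ofReal), z.re < 0) ∧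
    (∀ z ∈ spectrum ℂ (GNAG.map Complex.ofReal), z.re < 0) ∧
    condNumber GHB = Real.sqrt (L / μ) ∧
    condNumber GNAG = Real.sqrt (L / μ) := by
  have hμne : μ ≠ 0 := ne_of_gt hμpos
  have hBh : (μ⁻¹ • A).IsHermitian := by
    have h1 : Aᴴ = A := hApd.1
    show (μ⁻¹ • A)ᴴ = μ⁻¹ • A
    rw [Matrix.conjTranspose_smul, h1, star_trivial]
  set B := μ⁻¹ • A with hB
  set ev := hBh.eigenvalues with hev
  have hsmul : ∀ lam : ℝ, μ⁻¹ * lam ∈ spectrum ℝ B ↔ lam ∈ spectrum ℝ A := by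
    intro lam
    have h := spectrum.smul_mem_smul_iff (a := A) (s := lam)
      (r := Units.mk0 μ⁻¹ (inv_ne_zero hμne))
    simpa [Units.smul_def, smul_eq_mul, hB] using h
  have hBspec : ∀ x : ℝ, x ∈ spectrum ℝ B ↔ ∃ lam ∈ spectrum ℝ A, x = μ⁻¹ * lam := by
    intro x
    constructor
    · intro hx
      refine ⟨μ * x, ?_, by field_simp⟩
      apply (hsmul (μ * x)).mp
      have hxx : μ⁻¹ * (μ * x) = x := by field_simp
      rwa [hxx]
    · rintro ⟨lam, hlam, rfl⟩
      exact (hsmul lam).mpr hlam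
  have hev_mem : ∀ i, ev i ∈ spectrum ℝ B := fun i =>
    hBh.eigenvalues_mem_spectrum_real i
  have hev1 : ∀ i, 1 ≤ ev i := by
    intro i
    obtain ⟨lam, hlam, heq⟩ := (hBspec (ev i)).mp (hev_mem i)
    have hμle := (hbound lam hlam).1
    rw [heq]
    calc (1 : ℝ) = μ⁻¹ * μ := (inv_mul_cancel₀ hμne).symm
    _ ≤ μ⁻¹ * lam := by
      apply mul_le_mul_of_nonneg_left hμle (le_of_lt (inv_pos.mpr hμpos))
  have hevκ : ∀ i, ev i ≤ L / μ := by
    intro i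
    obtain ⟨lam, hlam, heq⟩ := (hBspec (ev i)).mp (hev_mem i)
    have hLle := (hbound lam hlam).2
    rw [heq, ← inv_mul_eq_div]
    apply mul_le_mul_of_nonneg_left hLle (le_of_lt (inv_pos.mpr hμpos))
  have h1 : ∃ i, ev i = 1 := by
    have : (1 : ℝ) ∈ spectrum ℝ B :=
      (hBspec 1).mpr ⟨μ, hμspec, (inv_mul_cancel₀ hμne).symm⟩
    obtain ⟨i, hi⟩ := StmtAux.real_spectrum_exists B hBh this
    exact ⟨i, hi.symm⟩
  have hκ : ∃ i, ev i = L / μ := by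
    have : L / μ ∈ spectrum ℝ B :=
      (hBspec (L / μ)).mpr ⟨L, hLspec, (inv_mul_eq_div μ L).symm ▸ rfl⟩
    obtain ⟨i, hi⟩ := StmtAux.real_spectrum_exists B hBh this
    exact ⟨i, hi.symm⟩
  have hcharHB : ∀ z : ℂ, z ∈ spectrum ℂ (GHB.map Complex.ofReal) ↔
      ∃ i, z ^ 2 + 2 * z + (ev i : ℂ) = 0 := by
    intro z
    rw [hGHB, StmtAux.mem_spectrum_iff_det, StmtAux.map_GHB, StmtAux.sub_GHB, StmtAux.key1,
      StmtAux.det_shift, StmtAux.mem_spectrum_map_iff B hBh]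
    constructor
    · rintro ⟨i, hi⟩
      exact ⟨i, by linear_combination -hi⟩
    · rintro ⟨i, hi⟩
      exact ⟨i, by linear_combination -hi⟩
  have hcharNAG : ∀ z : ℂ, z ∈ spectrum ℂ (GNAG.map Complex.ofReal) ↔
      ∃ i, z ^ 2 + 2 * z + (ev i : ℂ) = 0 := by
    intro z
    rw [hGNAG, StmtAux.mem_spectrum_iff_det, StmtAux.map_GNAG, StmtAux.sub_GNAG, StmtAux.key2]
    have hM : ((z + 1) * (z + 1)) • (1 : Matrix (Fin d) (Fin d) ℂ)
          + (B.map Complex.ofReal - 1)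
        = ((z + 1) * (z + 1) - 1) • 1 + B.map Complex.ofReal := by
      rw [sub_smul, one_smul]
      abel
    rw [hM, StmtAux.det_shift, StmtAux.mem_spectrum_map_iff B hBh]
    constructor
    · rintro ⟨i, hi⟩
      exact ⟨i, by linear_combination -hi⟩
    · rintro ⟨i, hi⟩
      exact ⟨i, by linear_combination -hi⟩
  obtain ⟨r1, c1⟩ := StmtAux.main_of_spec GHB ev (L / μ) hcharHB hev1 hevκ h1 hκ
  obtain ⟨r2, c2⟩ := StmtAux.main_of_spec GNAG ev (L / μ) hcharNAG hev1 hevκ h1 hκ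
  exact ⟨r1, r2, c1, c2⟩
end

section
/- Let A be a d×d real symmetric positive semidefinite matrix with largest eigenvalue L > 0. Let γ_0 > 0 and for each k ≥ 0 let α_k > 0 and γ_{k+1} > 0 satisfy γ_{k+1}(1 + α_k) = γ_k and L·α_k² = γ_{k+1}. For γ > 0 set G(γ) = [[−I, I], [−A/γ, 0]], with Gauss–Seidel splitting M(γ) = [[−I, 0], [−A/γ, 0]], N = [[0, I], [0, 0]], and E(α, G(γ)) = (I − αM(γ))⁻¹(I + αN). Define the rescaled matrix Ẽ_k = diag(I, γ_{k+1}·I) · E(α_k, G(γ_{k+1})) · diag(I, γ_k·I)⁻¹. Then the spectral radius satisfies ρ(Ẽ_k) = γ_{k+1}/γ_k = 1/(1 + α_k). -/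
open Matrix

-- quadratic modulus lemma
lemma quadAbs {t c : ℝ} (hc : 0 < c) (ht : t ^ 2 ≤ 4 * c ^ 2)
    {z : ℂ} (hz : z ^ 2 - t * z + c ^ 2 = 0) : ‖z‖ = c := by
  set w := (starRingEnd ℂ) z with hw
  have hconj : w ^ 2 - t * w + c ^ 2 = 0 := by
    have := congrArg (starRingEnd ℂ) hz
    simpa [map_sub, map_add, _root_.map_mul, map_pow, Complex.conj_ofReal] using this
  have hfac : (w - z) * (w - ((t : ℂ) - z)) = 0 := by linear_combination hconj - hz
  rcases mul_eq_zero.1 hfac with h | h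
  · -- z real
    have hzr : z = (z.re : ℂ) := by
      have h0 : w = z := sub_eq_zero.1 h
      rw [hw] at h0
      exact (Complex.conj_eq_iff_re.1 h0).symm ▸ (Complex.conj_eq_iff_re.1 h0)
    set x := z.re
    have hx : x ^ 2 - t * x + c ^ 2 = 0 := by
      have := hz
      rw [hzr] at this
      exact_mod_cast this
    have hx2 : x ^ 2 = c ^ 2 := by nlinarith [sq_nonneg (2 * x - t)]
    rw [hzr, Complex.norm_real, Real.norm_eq_abs]
    have h3 : (|x| - c) * (|x| + c) = 0 := by nlinarith [sq_abs x]
    rcases mul_eq_zero.1 h3 with h4 | h4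
    · linarith
    · nlinarith [abs_nonneg x]
  · have h5 : z * w = c ^ 2 := by
      have : w = (t : ℂ) - z := sub_eq_zero.1 h
      rw [this]; linear_combination -hz
    have h6 : (Complex.normSq z : ℂ) = ((c ^ 2 : ℝ) : ℂ) := by
      rw [← Complex.mul_conj z]; push_cast; exact h5
    have h7 : Complex.normSq z = c ^ 2 := by exact_mod_cast h6
    have h8 : ‖z‖ ^ 2 = c ^ 2 := by rw [Complex.sq_norm]; exact h7
    nlinarith [norm_nonneg z]

lemma specTransfer {d : ℕ} (A : Matrix (Fin d) (Fin d) ℝ) (μ : ℝ) :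
    μ ∈ spectrum ℝ (A.map (Complex.ofReal)) ↔ μ ∈ spectrum ℝ A := by
  rw [spectrum.mem_iff, spectrum.mem_iff, not_iff_not]
  have hmap : algebraMap ℝ (Matrix (Fin d) (Fin d) ℂ) μ - A.map Complex.ofReal
      = ((algebraMap ℝ (Matrix (Fin d) (Fin d) ℝ) μ - A).map Complex.ofReal) := by
    ext i j
    simp [Matrix.algebraMap_matrix_apply, Matrix.map_apply, Matrix.sub_apply, apply_ite]
  have hdet : (((algebraMap ℝ (Matrix (Fin d) (Fin d) ℝ) μ - A)).map Complex.ofReal).det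
      = Complex.ofReal ((algebraMap ℝ (Matrix (Fin d) (Fin d) ℝ) μ - A).det) := by
    have h := (RingHom.map_det Complex.ofRealHom (algebraMap ℝ (Matrix (Fin d) (Fin d) ℝ) μ - A)).symm
    rw [RingHom.mapMatrix_apply] at h
    exact h
  rw [hmap, Matrix.isUnit_iff_isUnit_det, Matrix.isUnit_iff_isUnit_det, hdet,
    isUnit_iff_ne_zero, isUnit_iff_ne_zero]
  simp [Complex.ofReal_eq_zero]

lemma specNonneg {d : ℕ} {A : Matrix (Fin d) (Fin d) ℝ} (hA : A.PosSemidef)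
    {μ : ℝ} (hμ : μ ∈ spectrum ℝ A) : 0 ≤ μ := by
  rw [spectrum.mem_iff] at hμ
  rw [Matrix.isUnit_iff_isUnit_det, isUnit_iff_ne_zero, not_not] at hμ
  obtain ⟨v, hv0, hv⟩ := (Matrix.exists_mulVec_eq_zero_iff).2 hμ
  rw [Matrix.sub_mulVec, sub_eq_zero] at hv
  have h2 : algebraMap ℝ (Matrix (Fin d) (Fin d) ℝ) μ *ᵥ v = μ • v := by
    rw [Matrix.algebraMap_eq_diagonal]
    ext i; simp [Matrix.mulVec_diagonal]
  rw [h2] at hv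
  have hquad := hA.dotProduct_mulVec_nonneg v
  rw [← hv] at hquad
  have hsv : star v = v := by ext i; simp
  rw [hsv, dotProduct_smul] at hquad
  have hvv : 0 < v ⬝ᵥ v := by
    have hnn : (0:ℝ) ≤ v ⬝ᵥ v := Finset.sum_nonneg fun i _ => mul_self_nonneg (v i)
    rcases lt_or_eq_of_le hnn with h | h
    · exact h
    · exact absurd (dotProduct_self_eq_zero.1 h.symm) hv0
  have : μ • (v ⬝ᵥ v) = μ * (v ⬝ᵥ v) := rfl
  rw [this] at hquad
  nlinarith

lemma EtilForm {d : ℕ} (A : Matrix (Fin d) (Fin d) ℝ) {a g G : ℝ}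
    (ha : 0 < a) (hg : 0 < g) (hG : 0 < G) (hr : g * (1 + a) = G) :
    (Matrix.fromBlocks 1 0 0 (g • 1) : Matrix (Fin d ⊕ Fin d) (Fin d ⊕ Fin d) ℝ) *
        ((1 - a • Matrix.fromBlocks (-1) 0 (-(g⁻¹ • A)) 0)⁻¹ *
          (1 + a • Matrix.fromBlocks 0 1 0 0)) *
        (Matrix.fromBlocks 1 0 0 (G • 1))⁻¹
      = Matrix.fromBlocks ((g/G) • 1) ((a*g/(G*G)) • 1)
          ((-(a*g/G)) • A) ((g/G) • 1 + (-(a^2*g/(G*G))) • A) := by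
  have h1a : (0:ℝ) < 1 + a := by linarith
  obtain rfl : G = g * (1 + a) := hr.symm
  have hone : (1 : Matrix (Fin d ⊕ Fin d) (Fin d ⊕ Fin d) ℝ) = fromBlocks 1 0 0 1 :=
    fromBlocks_one.symm
  set c : ℝ := 1/(1+a) with hc
  have hinv1 : (1 - a • Matrix.fromBlocks (-1) 0 (-(g⁻¹ • A)) 0)⁻¹
      = (Matrix.fromBlocks (c • 1) 0 ((-(a*c*g⁻¹)) • A) 1 : Matrix (Fin d ⊕ Fin d) (Fin d ⊕ Fin d) ℝ) := by
    apply Matrix.inv_eq_right_inv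
    rw [hone]
    simp only [sub_eq_add_neg, fromBlocks_smul, fromBlocks_neg, fromBlocks_add,
      fromBlocks_multiply]
    rw [fromBlocks_inj]
    refine ⟨?_, ?_, ?_, ?_⟩ <;>
      simp only [Matrix.smul_mul, Matrix.mul_smul, Matrix.add_mul, Matrix.mul_add,
        Matrix.neg_mul, Matrix.mul_neg, smul_smul, Matrix.one_mul, Matrix.mul_one,
        Matrix.zero_mul, Matrix.mul_zero, add_zero, zero_add, neg_neg, smul_neg,
        neg_zero, smul_zero] <;>
      try rfl
    · rw [smul_add, smul_smul, ← add_smul,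
        show c + c * a = (1:ℝ) by rw [hc]; field_simp,
        one_smul]
    · rw [← add_smul, show c * (a * g⁻¹) + -(a * c * g⁻¹) = (0:ℝ) by ring, zero_smul]
  have hinv2 : (Matrix.fromBlocks 1 0 0 ((g * (1 + a)) • 1) :
        Matrix (Fin d ⊕ Fin d) (Fin d ⊕ Fin d) ℝ)⁻¹
      = (Matrix.fromBlocks 1 0 0 ((g * (1 + a))⁻¹ • 1) : Matrix (Fin d ⊕ Fin d) (Fin d ⊕ Fin d) ℝ) := by
    apply Matrix.inv_eq_right_inv
    rw [hone, fromBlocks_multiply, fromBlocks_inj]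
    refine ⟨by simp, by simp, by simp, ?_⟩
    simp only [Matrix.smul_mul, Matrix.mul_smul, smul_smul, Matrix.mul_one, Matrix.zero_mul,
      Matrix.mul_zero, zero_add, add_zero]
    rw [inv_mul_cancel₀ (by positivity : (g * (1+a)) ≠ 0), one_smul]
  rw [hinv1, hinv2, hone]
  simp only [fromBlocks_smul, fromBlocks_add, fromBlocks_multiply]
  rw [fromBlocks_inj]
  refine ⟨?_, ?_, ?_, ?_⟩ <;>
    simp only [Matrix.smul_mul, Matrix.mul_smul, Matrix.add_mul, Matrix.mul_add,
      Matrix.neg_mul, Matrix.mul_neg, smul_smul, Matrix.one_mul, Matrix.mul_one,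
      Matrix.zero_mul, Matrix.mul_zero, add_zero, zero_add, neg_neg, smul_neg,
      neg_zero, smul_zero, smul_add]
  · congr 1
    try rw [hc]
    field_simp
  · congr 1
    try rw [hc]
    field_simp
    try ring
  · congr 1
    try rw [hc]
    field_simp
    try ring
  · rw [add_comm]
    congr 1
    · congr 1
      try rw [hc]
      field_simp
      try ring
    · congr 1
      try rw [hc]
      field_simp
      try ring

lemma keyDet {d : ℕ} {B : Matrix (Fin d) (Fin d) ℂ} (hB : B.IsHermitian)
    (c k1 k2 k3 z : ℂ) (hzc : z ≠ c)
    (hz : z ∈ spectrum ℂ (Matrix.fromBlocks (c • 1) (k1 • 1) ((-k2) • B) (c • 1 + (-k3) • B) :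
       Matrix (Fin d ⊕ Fin d) (Fin d ⊕ Fin d) ℂ)) :
    ∃ i, (z - c) ^ 2 + (k3 * (z - c) + k1 * k2) * (hB.eigenvalues i : ℂ) = 0 := by
  classical
  set M : Matrix (Fin d ⊕ Fin d) (Fin d ⊕ Fin d) ℂ :=
    Matrix.fromBlocks (c • 1) (k1 • 1) ((-k2) • B) (c • 1 + (-k3) • B) with hM
  set U : Matrix (Fin d) (Fin d) ℂ := (hB.eigenvectorUnitary : Matrix (Fin d) (Fin d) ℂ) with hUdef
  have hU1 : U * star U = 1 := mem_unitaryGroup_iff.1 (hB.eigenvectorUnitary).2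
  set Dm : Matrix (Fin d) (Fin d) ℂ := diagonal (Complex.ofReal ∘ hB.eigenvalues) with hDm
  have hBspec : B = U * Dm * star U := hB.spectral_theorem
  set V : Matrix (Fin d ⊕ Fin d) (Fin d ⊕ Fin d) ℂ := Matrix.fromBlocks U 0 0 U with hV
  set X : Matrix (Fin d ⊕ Fin d) (Fin d ⊕ Fin d) ℂ :=
    Matrix.fromBlocks ((z - c) • 1) ((-k1) • 1) (k2 • Dm) ((z - c) • 1 + k3 • Dm) with hX
  have hstarV : star V = Matrix.fromBlocks (star U) 0 0 (star U) := by
    rw [hV, Matrix.star_eq_conjTranspose, fromBlocks_conjTranspose]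
    simp [Matrix.star_eq_conjTranspose]
  have hVV : V * star V = 1 := by
    rw [hV, hstarV, fromBlocks_multiply]
    simp [hU1, ← fromBlocks_one]
  have hconj : algebraMap ℂ (Matrix (Fin d ⊕ Fin d) (Fin d ⊕ Fin d) ℂ) z - M = V * X * star V := by
    rw [hstarV, hV, hX, fromBlocks_multiply, fromBlocks_multiply,
      Algebra.algebraMap_eq_smul_one,
      show (1 : Matrix (Fin d ⊕ Fin d) (Fin d ⊕ Fin d) ℂ) = fromBlocks 1 0 0 1 from
        fromBlocks_one.symm,
      hM, fromBlocks_smul, sub_eq_add_neg, fromBlocks_neg, fromBlocks_add, fromBlocks_inj]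
    refine ⟨?_, ?_, ?_, ?_⟩ <;>
      simp only [Matrix.smul_mul, Matrix.mul_smul, Matrix.add_mul, Matrix.mul_add,
        Matrix.neg_mul, Matrix.mul_neg, smul_smul, Matrix.one_mul, Matrix.mul_one,
        Matrix.zero_mul, Matrix.mul_zero, add_zero, zero_add, neg_neg, smul_neg,
        neg_zero, smul_zero, smul_add, hU1, ← hBspec]
    · rw [sub_smul, sub_eq_add_neg]
    · rw [neg_smul]
    · rw [neg_smul, neg_neg]
    · rw [sub_smul, neg_add, neg_smul, neg_neg]
      abel
  -- determinant of X is zero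
  have hdet0 : (algebraMap ℂ (Matrix (Fin d ⊕ Fin d) (Fin d ⊕ Fin d) ℂ) z - M).det = 0 := by
    rw [spectrum.mem_iff, Matrix.isUnit_iff_isUnit_det, isUnit_iff_ne_zero, not_not] at hz
    exact hz
  have hdetX : X.det = 0 := by
    have h1 : (V * X * star V).det = V.det * X.det * (star V).det := by
      rw [Matrix.det_mul, Matrix.det_mul]
    have h2 : V.det * (star V).det = 1 := by
      rw [← Matrix.det_mul, hVV, Matrix.det_one]
    have := hconj ▸ hdet0
    rw [h1] at this
    calc X.det = V.det * X.det * (star V).det := by ring_nf; rw [mul_comm, ← mul_assoc, mul_comm ((star V).det), h2, one_mul]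
    _ = 0 := this
  -- Schur complement
  have hzc' : z - c ≠ 0 := sub_ne_zero.2 hzc
  letI : Invertible ((z - c) • (1 : Matrix (Fin d) (Fin d) ℂ)) :=
    invertibleOfRightInverse _ ((z - c)⁻¹ • (1 : Matrix (Fin d) (Fin d) ℂ)) (by
      rw [Matrix.smul_mul, Matrix.mul_smul, Matrix.one_mul, smul_smul,
        mul_inv_cancel₀ hzc', one_smul])
  have hSchur := Matrix.det_fromBlocks₁₁ ((z - c) • (1 : Matrix (Fin d) (Fin d) ℂ))
    ((-k1) • (1 : Matrix (Fin d) (Fin d) ℂ)) (k2 • Dm) ((z - c) • 1 + k3 • Dm)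
  have hinvOf : (⅟((z - c) • (1 : Matrix (Fin d) (Fin d) ℂ))) = (z - c)⁻¹ • (1 : Matrix (Fin d) (Fin d) ℂ) := rfl
  rw [hinvOf] at hSchur
  rw [hX, hSchur] at hdetX
  have hd1 : ((z - c) • (1 : Matrix (Fin d) (Fin d) ℂ)).det ≠ 0 := by
    rw [Matrix.det_smul, Matrix.det_one, mul_one]
    exact pow_ne_zero _ hzc'
  have hdetS : ((z - c) • 1 + k3 • Dm - k2 • Dm * (z - c)⁻¹ • 1 * (-k1) • 1).det = 0 :=
    (mul_eq_zero.1 hdetX).resolve_left hd1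
  have hS : ((z - c) • 1 + k3 • Dm - k2 • Dm * (z - c)⁻¹ • 1 * (-k1) • (1 : Matrix (Fin d) (Fin d) ℂ))
      = diagonal (fun i => (z - c) + (k3 + k1 * k2 * (z - c)⁻¹) * (hB.eigenvalues i : ℂ)) := by
    rw [hDm]
    ext i j
    by_cases h : i = j <;>
      simp [h, Matrix.mul_smul, Matrix.smul_mul, smul_smul, Matrix.diagonal_apply,
        Matrix.one_apply, Matrix.mul_apply, Matrix.sub_apply, Matrix.add_apply, Function.comp] <;>
      ring
  rw [hS, Matrix.det_diagonal] at hdetS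
  obtain ⟨i, _, hi⟩ := Finset.prod_eq_zero_iff.1 hdetS
  refine ⟨i, ?_⟩
  field_simp at hi
  linear_combination hi


theorem stmt2 {d : ℕ} (A : Matrix (Fin d) (Fin d) ℝ) (L : ℝ)
    (hA : A.IsSymm) (hApsd : A.PosSemidef)
    (hLspec : L ∈ spectrum ℝ A) (hbound : ∀ lam ∈ spectrum ℝ A, lam ≤ L) (hLpos : 0 < L)
    (γ α : ℕ → ℝ) (hγ0 : 0 < γ 0) (hαpos : ∀ k, 0 < α k) (hγpos : ∀ k, 0 < γ (k + 1))
    (hrec : ∀ k, γ (k + 1) * (1 + α k) = γ k)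
    (hstep : ∀ k, L * (α k) ^ 2 = γ (k + 1))
    (k : ℕ) (Etil : Matrix (Fin d ⊕ Fin d) (Fin d ⊕ Fin d) ℝ)
    (hEtil : Etil =
      Matrix.fromBlocks 1 0 0 (γ (k + 1) • 1) *
        ((1 - α k • Matrix.fromBlocks (-1) 0 (-((γ (k + 1))⁻¹ • A)) 0)⁻¹ *
          (1 + α k • Matrix.fromBlocks 0 1 0 0)) *
        (Matrix.fromBlocks 1 0 0 (γ k • 1))⁻¹) :
    specRad Etil = γ (k + 1) / γ k ∧ γ (k + 1) / γ k = 1 / (1 + α k) := by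
  have ha : 0 < α k := hαpos k
  have hg : 0 < γ (k + 1) := hγpos k
  have hG : 0 < γ k := by
    cases k with
    | zero => exact hγ0
    | succ n => exact hγpos n
  have hr : γ (k + 1) * (1 + α k) = γ k := hrec k
  have hs : L * (α k) ^ 2 = γ (k + 1) := hstep k
  have h1a : (0:ℝ) < 1 + α k := by linarith
  set a := α k
  set g := γ (k + 1)
  set G := γ k
  have hsecond : g / G = 1 / (1 + a) := by
    rw [← hr, div_eq_div_iff (by positivity) (by positivity : (1:ℝ) + a ≠ 0)]; ring
  refine ⟨?_, hsecond⟩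
  -- explicit form of Etil
  have hE : Etil = Matrix.fromBlocks ((g/G) • 1) ((a*g/(G*G)) • 1)
      ((-(a*g/G)) • A) ((g/G) • 1 + (-(a^2*g/(G*G))) • A) := by
    rw [hEtil]; exact EtilForm A ha hg hG hr
  set cr : ℝ := g / G with hcr
  set k1 : ℝ := a * g / (G * G) with hk1
  set k2 : ℝ := a * g / G with hk2
  set k3 : ℝ := a ^ 2 * g / (G * G) with hk3
  have hcpos : 0 < cr := by positivity
  have hc1 : cr ≤ 1 := by
    rw [hcr, div_le_one hG, ← hr]; nlinarith
  set B : Matrix (Fin d) (Fin d) ℂ := A.map Complex.ofReal with hBdef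
  have hB : B.IsHermitian := by
    ext i j
    simp only [hBdef, Matrix.conjTranspose_apply, Matrix.map_apply, RCLike.star_def,
      Complex.conj_ofReal, Complex.ofReal_inj]
    exact hA.apply i j
  -- map to ℂ
  have hmapE : Etil.map Complex.ofReal
      = Matrix.fromBlocks ((cr:ℂ) • 1) ((k1:ℂ) • 1) ((-(k2:ℂ)) • B) ((cr:ℂ) • 1 + (-(k3:ℂ)) • B) := by
    rw [hE]
    ext i j
    rcases i with i | i <;> rcases j with j | j <;>
      simp [Matrix.map_apply, Matrix.one_apply, apply_ite, Matrix.smul_apply, Matrix.add_apply,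
        hBdef] <;>
      (try (push_cast; ring)) <;>
      (try (split_ifs with h <;> simp [h]))
  -- eigenvalue bounds
  have hbound' : ∀ i, 0 ≤ hB.eigenvalues i ∧ hB.eigenvalues i ≤ L := by
    intro i
    have h1 : hB.eigenvalues i ∈ spectrum ℝ B := hB.eigenvalues_mem_spectrum_real i
    have h2 : hB.eigenvalues i ∈ spectrum ℝ A := (specTransfer A _).1 h1
    exact ⟨specNonneg hApsd h2, hbound _ h2⟩
  -- every spectral point has modulus cr
  have hall : ∀ z ∈ spectrum ℂ (Etil.map Complex.ofReal), ‖z‖ = cr := by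
    intro z hz
    by_cases hzc : z = (cr : ℂ)
    · rw [hzc, Complex.norm_real, Real.norm_eq_abs, abs_of_pos hcpos]
    · rw [hmapE] at hz
      obtain ⟨i, hi⟩ := keyDet hB (cr:ℂ) (k1:ℂ) (k2:ℂ) (k3:ℂ) z hzc hz
      set μ : ℝ := hB.eigenvalues i with hμ
      obtain ⟨hμ0, hμL⟩ := hbound' i
      have hid : k3 * cr = k1 * k2 := by
        rw [hk1, hk2, hk3, hcr]; field_simp
      have hidC : (k3:ℂ) * (cr:ℂ) = (k1:ℂ) * (k2:ℂ) := by push_cast [← hid]; norm_cast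
      have hquad : z ^ 2 - ((2*cr - k3*μ : ℝ) : ℂ) * z + ((cr:ℝ):ℂ) ^ 2 = 0 := by
        push_cast
        linear_combination hi + (μ:ℂ) * hidC
      have hk30 : 0 ≤ k3 := by positivity
      have hk3L : k3 * L = cr ^ 2 := by
        rw [hk3, hcr]; field_simp; linear_combination hs
      have hsle : k3 * μ ≤ cr ^ 2 := by
        rw [← hk3L]; exact mul_le_mul_of_nonneg_left hμL hk30
      have hs0 : 0 ≤ k3 * μ := mul_nonneg hk30 hμ0
      have h4 : k3 * μ ≤ cr := hsle.trans (by nlinarith)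
      have h5 : 0 ≤ (k3 * μ) * (4 * cr - k3 * μ) := mul_nonneg hs0 (by linarith)
      have ht : (2*cr - k3*μ) ^ 2 ≤ 4 * cr ^ 2 := by nlinarith [h5]
      exact quadAbs hcpos ht hquad
  -- nonemptiness
  have hd : d ≠ 0 := by
    intro h
    subst h
    rw [spectrum.mem_iff] at hLspec
    exact hLspec (isUnit_of_subsingleton _)
  haveI : Nonempty (Fin d) := ⟨⟨0, Nat.pos_of_ne_zero hd⟩⟩
  have hne : (spectrum ℂ (Etil.map Complex.ofReal)).Nonempty :=
    spectrum.nonempty_of_isAlgClosed_of_finiteDimensional ℂ _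
  have hset : {r : ℝ | ∃ z ∈ spectrum ℂ (Etil.map Complex.ofReal), r = ‖z‖} = {cr} := by
    ext r
    simp only [Set.mem_setOf_eq, Set.mem_singleton_iff]
    constructor
    · rintro ⟨z, hz, rfl⟩
      exact hall z hz
    · rintro rfl
      obtain ⟨z₀, hz₀⟩ := hne
      exact ⟨z₀, hz₀, (hall z₀ hz₀).symm⟩
  rw [specRad, hset, csSup_singleton]
end

section
/- Let L > 0 and γ_0 > 0, and for each k ≥ 0 let α_k > 0 and γ_{k+1} > 0 satisfy γ_{k+1}(1 + α_k) = γ_k and L·α_k² = γ_{k+1}. Then for every k ≥ 0, γ_k/γ_0 ≤ 4(√L + √γ_0)² / (√γ_0 · k + 2√L + 2√γ_0)². In particular the product ∏_{i=0}^{k−1} 1/(1 + α_i) = γ_k/γ_0 decays like O(1/k²). -/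
set_option maxHeartbeats 1000000 in
theorem stmt3 (L : ℝ) (hL : 0 < L) (γ α : ℕ → ℝ) (hγ0 : 0 < γ 0)
    (hαpos : ∀ k, 0 < α k) (hγpos : ∀ k, 0 < γ (k + 1))
    (hrec : ∀ k, γ (k + 1) * (1 + α k) = γ k)
    (hstep : ∀ k, L * (α k) ^ 2 = γ (k + 1)) :
    ∀ k : ℕ,
      γ k / γ 0 ≤ 4 * (Real.sqrt L + Real.sqrt (γ 0)) ^ 2 /
        (Real.sqrt (γ 0) * k + 2 * Real.sqrt L + 2 * Real.sqrt (γ 0)) ^ 2 ∧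
      (∏ i ∈ Finset.range k, (1 + α i)⁻¹) = γ k / γ 0 := by
  have hγall : ∀ k, 0 < γ k := fun k => Nat.casesOn k hγ0 hγpos
  have hmono : ∀ k, γ (k + 1) ≤ γ k := by
    intro k
    nlinarith [hrec k, hαpos k, hγpos k]
  have hle0 : ∀ k, γ k ≤ γ 0 := by
    intro k
    induction k with
    | zero => exact le_refl _
    | succ n ih => exact (hmono n).trans ih
  set s := Real.sqrt L with hsdef
  set g := Real.sqrt (γ 0) with hgdef
  have hs : 0 < s := Real.sqrt_pos.mpr hL
  have hg : 0 < g := Real.sqrt_pos.mpr hγ0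
  have hs2 : s ^ 2 = L := Real.sq_sqrt hL.le
  have hg2 : g ^ 2 = γ 0 := Real.sq_sqrt hγ0.le
  have step : ∀ k, 1 / Real.sqrt (γ k) + 1 / (2 * (s + g)) ≤ 1 / Real.sqrt (γ (k + 1)) := by
    intro k
    set u := Real.sqrt (γ (k + 1)) with hudef
    set v := Real.sqrt (γ k) with hvdef
    have hupos : 0 < u := Real.sqrt_pos.mpr (hγpos k)
    have hvpos : 0 < v := Real.sqrt_pos.mpr (hγall k)
    have hu2 : u ^ 2 = γ (k + 1) := Real.sq_sqrt (hγpos k).le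
    have hv2 : v ^ 2 = γ k := Real.sq_sqrt (hγall k).le
    have hug : u ≤ g := Real.sqrt_le_sqrt ((hmono k).trans (hle0 k))
    have hα : s * α k = u := by
      have h1 : (s * α k) ^ 2 = u ^ 2 := by rw [mul_pow, hs2, hu2]; exact hstep k
      nlinarith [hαpos k, mul_pos hs (hαpos k), hupos]
    have hrel : s * v ^ 2 = s * u ^ 2 + u ^ 3 := by
      rw [hv2, hu2, ← hrec k]
      linear_combination (γ (k + 1)) * hα - u * hu2
    have hsv : s * v ≤ s * u + u ^ 2 / 2 := by
      nlinarith [hrel, sq_nonneg (u ^ 2), mul_pos hs hvpos, mul_pos hs hupos,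
        mul_pos (mul_pos hs hupos) hupos]
    have hpoly : u * (2 * (s + g)) + u * v ≤ v * (2 * (s + g)) := by
      nlinarith [hrel, hsv, hug, hupos, hvpos, hs, hg,
        mul_pos hs (add_pos hvpos hupos), mul_pos hupos hvpos,
        mul_pos hupos hupos, mul_nonneg (sub_nonneg.mpr hug) (sq_nonneg u),
        mul_nonneg (mul_nonneg hupos.le hupos.le) (sub_nonneg.mpr hsv)]
    rw [div_add_div _ _ hvpos.ne' (by positivity : (2 * (s + g)) ≠ 0),
      div_le_div_iff₀ (by positivity) hupos]
    nlinarith [hpoly]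
  have cum : ∀ k : ℕ, 1 / g + (k : ℝ) / (2 * (s + g)) ≤ 1 / Real.sqrt (γ k) := by
    intro k
    induction k with
    | zero => simp [hgdef]
    | succ n ih =>
      have h := step n
      push_cast
      have : 1 / g + ((n : ℝ) + 1) / (2 * (s + g)) =
          (1 / g + (n : ℝ) / (2 * (s + g))) + 1 / (2 * (s + g)) := by ring
      rw [this]
      linarith
  have prodeq : ∀ k, (∏ i ∈ Finset.range k, (1 + α i)⁻¹) = γ k / γ 0 := by
    intro k
    induction k with
    | zero => simp [div_self hγ0.ne']
    | succ n ih =>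
      rw [Finset.prod_range_succ, ih]
      have h1 : (0 : ℝ) < 1 + α n := by linarith [hαpos n]
      field_simp
      linear_combination (-1) * hrec n
  intro k
  refine ⟨?_, prodeq k⟩
  set w := Real.sqrt (γ k) with hwdef
  have hw : 0 < w := Real.sqrt_pos.mpr (hγall k)
  have hw2 : w ^ 2 = γ k := Real.sq_sqrt (hγall k).le
  have hD : 0 < g * (k : ℝ) + 2 * s + 2 * g := by positivity
  have hwD : w * (g * (k : ℝ) + 2 * s + 2 * g) ≤ 2 * g * (s + g) := by
    have h := cum k
    rw [div_add_div _ _ hg.ne' (by positivity : (2 * (s + g)) ≠ 0),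
      div_le_div_iff₀ (by positivity) hw] at h
    nlinarith [h]
  rw [div_le_div_iff₀ (hγall 0) (by positivity)]
  nlinarith [hwD, mul_pos hw hD, hw2, hg2, sq_nonneg (w * (g * (k : ℝ) + 2 * s + 2 * g))]
end

section
/- Let V be a real Hilbert space, μ ≥ 0, and let f : V → ℝ be differentiable and μ-strongly convex, with global minimizer x*. Let γ_0 > 0 and γ(t) = μ + (γ_0 − μ)e^{−t} (the solution of γ' = μ − γ, γ(0) = γ_0). Suppose x, v : [0, ∞) → V are continuously differentiable and satisfy the NAG flow system x'(t) = v(t) − x(t) and γ(t)·v'(t) = μ(x(t) − v(t)) − ∇f(x(t)) for all t ≥ 0. Then the Lyapunov function 𝓛(t) = f(x(t)) − f(x*) + (γ(t)/2)‖v(t) − x*‖² satisfies 𝓛(t) ≤ e^{−t}·𝓛(0) for all t ≥ 0. -/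
open RealInnerProductSpace

lemma stmt4_aux {V : Type*} [NormedAddCommGroup V] [InnerProductSpace ℝ V]
    (c μ : ℝ) (hc : c ≠ 0) (a b g : V) :
    c / 2 * (⟪b, c⁻¹ • (μ • (a - b) - g)⟫ + ⟪c⁻¹ • (μ • (a - b) - g), b⟫)
      = μ * ⟪a, b⟫ - μ * ⟪b, b⟫ - ⟪g, b⟫ := by
  simp only [real_inner_smul_right, real_inner_smul_left, inner_sub_left, inner_sub_right,
    real_inner_comm b a, real_inner_comm b g]
  field_simp
  ring

lemma stmt4_aux2 {V : Type*} [NormedAddCommGroup V] [InnerProductSpace ℝ V] (a b : V) :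
    ⟪a - b, a - b⟫ = ⟪a, a⟫ - 2 * ⟪a, b⟫ + ⟪b, b⟫ := by
  rw [inner_sub_left, inner_sub_right, inner_sub_right, real_inner_comm b a]
  ring

theorem stmt4 {V : Type*} [NormedAddCommGroup V] [InnerProductSpace ℝ V] [CompleteSpace V]
    (μ : ℝ) (hμ : 0 ≤ μ) (f : V → ℝ) (f' : V → V)
    (hdiff : ∀ z, HasGradientAt f (f' z) z)
    (hconv : ∀ z w : V, f z - f w - ⟪f' w, z - w⟫ ≥ μ / 2 * ‖z - w‖ ^ 2)
    (xstar : V) (hmin : ∀ z, f xstar ≤ f z)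
    (γ0 : ℝ) (hγ0 : 0 < γ0)
    (γ : ℝ → ℝ) (hγ : ∀ t, γ t = μ + (γ0 - μ) * Real.exp (-t))
    (x v : ℝ → V)
    (hx : ∀ t ≥ (0 : ℝ), HasDerivAt x (v t - x t) t)
    (hv : ∀ t ≥ (0 : ℝ), HasDerivAt v ((γ t)⁻¹ • (μ • (x t - v t) - f' (x t))) t) :
    ∀ t ≥ (0 : ℝ),
      f (x t) - f xstar + γ t / 2 * ‖v t - xstar‖ ^ 2 ≤
        Real.exp (-t) * (f (x 0) - f xstar + γ 0 / 2 * ‖v 0 - xstar‖ ^ 2) := by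
  intro t ht
  have hγpos : ∀ s : ℝ, 0 ≤ s → 0 < γ s := by
    intro s hs
    rw [hγ]
    have h1 : 0 < Real.exp (-s) := Real.exp_pos _
    have h2 : Real.exp (-s) ≤ 1 := Real.exp_le_one_iff.mpr (by linarith)
    nlinarith
  -- Lyapunov function
  set L : ℝ → ℝ := fun s => f (x s) - f xstar + γ s / 2 * ⟪v s - xstar, v s - xstar⟫ with hLdef
  set D : ℝ → ℝ := fun s =>
    ⟪f' (x s), v s - x s⟫ + ((μ - γ s) / 2 * ⟪v s - xstar, v s - xstar⟫
      + γ s / 2 * (⟪v s - xstar, (γ s)⁻¹ • (μ • (x s - v s) - f' (x s))⟫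
        + ⟪(γ s)⁻¹ • (μ • (x s - v s) - f' (x s)), v s - xstar⟫)) with hDdef
  have hγderiv : ∀ s : ℝ, HasDerivAt γ (μ - γ s) s := by
    intro s
    have h : HasDerivAt (fun u : ℝ => μ + (γ0 - μ) * Real.exp (-u))
        ((γ0 - μ) * (Real.exp (-s) * (-1))) s := by
      have := ((Real.hasDerivAt_exp (-s)).comp s ((hasDerivAt_id s).neg)).const_mul (γ0 - μ)
      simpa using this.const_add μ
    have hfun : γ = fun u : ℝ => μ + (γ0 - μ) * Real.exp (-u) := funext hγ
    have h2 : HasDerivAt γ ((γ0 - μ) * (Real.exp (-s) * (-1))) s := hfun ▸ h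
    convert h2 using 1
    rw [hγ]; ring
  have hLderiv : ∀ s : ℝ, 0 ≤ s → HasDerivAt L (D s) s := by
    intro s hs
    have h1 : HasDerivAt (fun u => f (x u)) ⟪f' (x s), v s - x s⟫ s := by
      have := (hdiff (x s)).hasFDerivAt.comp_hasDerivAt s (hx s hs)
      simp at this
      exact this
    have hvd : HasDerivAt (fun u => v u - xstar) ((γ s)⁻¹ • (μ • (x s - v s) - f' (x s))) s := by
      simpa using (hv s hs).sub_const xstar
    have h2 : HasDerivAt (fun u => ⟪v u - xstar, v u - xstar⟫)
        (⟪v s - xstar, (γ s)⁻¹ • (μ • (x s - v s) - f' (x s))⟫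
          + ⟪(γ s)⁻¹ • (μ • (x s - v s) - f' (x s)), v s - xstar⟫) s :=
      hvd.inner ℝ hvd
    have h3 : HasDerivAt (fun u => γ u / 2) ((μ - γ s) / 2) s := (hγderiv s).div_const 2
    have h4 := ((h1.sub_const (f xstar)).add (h3.mul h2))
    exact h4
  -- key inequality : D s ≤ - L s
  have hkey : ∀ s : ℝ, 0 ≤ s → D s ≤ -L s := by
    intro s hs
    have hγs := hγpos s hs
    have hcancel : γ s • ((γ s)⁻¹ • (μ • (x s - v s) - f' (x s)))
        = μ • (x s - v s) - f' (x s) := by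
      rw [smul_smul, mul_inv_cancel₀ (ne_of_gt hγs), one_smul]
    have hconv' := hconv xstar (x s)
    have hconvin : f (x s) - f xstar - ⟪f' (x s), (x s - xstar)⟫
        ≤ - (μ / 2 * ‖x s - xstar‖ ^ 2) := by
      have : ⟪f' (x s), xstar - x s⟫ = - ⟪f' (x s), x s - xstar⟫ := by
        rw [← inner_neg_right]; congr 1; abel
      rw [this, norm_sub_rev] at hconv'
      linarith
    set a := x s - xstar with ha
    set b := v s - xstar with hb
    have hab : x s - v s = a - b := by rw [ha, hb]; abel
    have hvx : v s - x s = b - a := by rw [ha, hb]; abel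
    simp only [hDdef, hLdef, hab, hvx]
    have e1 : ⟪f' (x s), b - a⟫ = ⟪f' (x s), b⟫ - ⟪f' (x s), a⟫ := inner_sub_right _ _ _
    have e2 : γ s / 2 * (⟪b, (γ s)⁻¹ • (μ • (a - b) - f' (x s))⟫
        + ⟪(γ s)⁻¹ • (μ • (a - b) - f' (x s)), b⟫)
        = μ * ⟪a, b⟫ - μ * ⟪b, b⟫ - ⟪f' (x s), b⟫ :=
      stmt4_aux (γ s) μ (ne_of_gt hγs) a b (f' (x s))
    rw [e1, e2]
    have hsq : (0:ℝ) ≤ μ / 2 * ⟪a - b, a - b⟫ := by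
      have := real_inner_self_nonneg (x := a - b)
      positivity
    have hexp : ⟪a - b, a - b⟫ = ⟪a, a⟫ - 2 * ⟪a, b⟫ + ⟪b, b⟫ := stmt4_aux2 a b
    have hna : ‖a‖ ^ 2 = ⟪a, a⟫ := (real_inner_self_eq_norm_sq a).symm
    rw [hna] at hconvin
    rw [hexp] at hsq
    nlinarith [hconvin, hsq]
  -- g s = exp s * L s is antitone on [0, ∞)
  set g : ℝ → ℝ := fun s => Real.exp s * L s with hgdef
  have hgderiv : ∀ s : ℝ, 0 ≤ s → HasDerivAt g (Real.exp s * L s + Real.exp s * D s) s := by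
    intro s hs
    exact (Real.hasDerivAt_exp s).mul (hLderiv s hs)
  have hanti : AntitoneOn g (Set.Ici (0:ℝ)) := by
    apply antitoneOn_of_deriv_nonpos (convex_Ici 0)
    · intro s hs
      exact ((hgderiv s hs).continuousAt).continuousWithinAt
    · intro s hs
      rw [interior_Ici] at hs
      exact ((hgderiv s (le_of_lt hs)).differentiableAt).differentiableWithinAt
    · intro s hs
      rw [interior_Ici] at hs
      rw [(hgderiv s (le_of_lt hs)).deriv]
      have := hkey s (le_of_lt hs)
      nlinarith [Real.exp_pos s]
  have hgt : g t ≤ g 0 := hanti (Set.self_mem_Ici) ht ht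
  have : Real.exp t * L t ≤ L 0 := by simpa [hgdef] using hgt
  have hfin : L t ≤ Real.exp (-t) * L 0 := by
    rw [Real.exp_neg]
    rw [inv_mul_eq_div, le_div_iff₀ (Real.exp_pos t)]
    linarith [this]
  simpa [hLdef, real_inner_self_eq_norm_sq] using hfin
end

section
/- Let V be a real Hilbert space, μ ≥ 0, and let f : V → ℝ be differentiable and μ-strongly convex, with global minimizer x*. Let α : [0, ∞) → (0, ∞) be continuous, and let β : [0, ∞) → (0, ∞) be differentiable with β(0) = γ_0 > 0 and β'(τ) ≤ α(τ)(μ − β(τ)) for all τ ≥ 0. Suppose y, w : [0, ∞) → V are continuously differentiable and satisfy the rescaled NAG flow y'(τ) = α(τ)(w(τ) − y(τ)) and β(τ)·w'(τ) = μ·α(τ)(y(τ) − w(τ)) − α(τ)∇f(y(τ)). Then the Lyapunov function 𝓛̃(τ) = f(y(τ)) − f(x*) + (β(τ)/2)‖w(τ) − x*‖² satisfies 𝓛̃(τ) ≤ exp(−∫₀^τ α(s) ds)·𝓛̃(0) for all τ ≥ 0. -/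
open RealInnerProductSpace

theorem stmt5 {V : Type*} [NormedAddCommGroup V] [InnerProductSpace ℝ V] [CompleteSpace V]
    (μ : ℝ) (hμ : 0 ≤ μ) (f : V → ℝ) (f' : V → V)
    (hdiff : ∀ z, HasGradientAt f (f' z) z)
    (hconv : ∀ z w : V, f z - f w - ⟪f' w, z - w⟫ ≥ μ / 2 * ‖z - w‖ ^ 2)
    (xstar : V) (hmin : ∀ z, f xstar ≤ f z)
    (γ0 : ℝ) (hγ0 : 0 < γ0)
    (α : ℝ → ℝ) (hαcont : ContinuousOn α (Set.Ici 0)) (hαpos : ∀ τ ≥ (0 : ℝ), 0 < α τ)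
    (β β' : ℝ → ℝ) (hβ0 : β 0 = γ0) (hβpos : ∀ τ ≥ (0 : ℝ), 0 < β τ)
    (hβderiv : ∀ τ ≥ (0 : ℝ), HasDerivAt β (β' τ) τ)
    (hβineq : ∀ τ ≥ (0 : ℝ), β' τ ≤ α τ * (μ - β τ))
    (y w : ℝ → V)
    (hy : ∀ τ ≥ (0 : ℝ), HasDerivAt y (α τ • (w τ - y τ)) τ)
    (hw : ∀ τ ≥ (0 : ℝ), HasDerivAt w
      ((β τ)⁻¹ • ((μ * α τ) • (y τ - w τ) - α τ • f' (y τ))) τ) :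
    ∀ τ ≥ (0 : ℝ),
      f (y τ) - f xstar + β τ / 2 * ‖w τ - xstar‖ ^ 2 ≤
        Real.exp (-(∫ s in (0 : ℝ)..τ, α s)) *
          (f (y 0) - f xstar + β 0 / 2 * ‖w 0 - xstar‖ ^ 2) := by
  -- extended α, continuous on all of ℝ
  set αt : ℝ → ℝ := fun t => α (max t 0) with hαtdef
  have hαtcont : Continuous αt :=
    hαcont.comp_continuous (continuous_id.max continuous_const) fun t => Set.mem_Ici.mpr (le_max_right _ _)
  have hαteq : ∀ t ≥ (0 : ℝ), αt t = α t := fun t ht => by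
    simp [hαtdef, max_eq_left ht]
  set A : ℝ → ℝ := fun τ => ∫ s in (0 : ℝ)..τ, αt s with hAdef
  have hAderiv : ∀ τ : ℝ, HasDerivAt A (αt τ) τ := fun τ =>
    (hαtcont.integral_hasStrictDerivAt 0 τ).hasDerivAt
  -- Lyapunov function (inner product form)
  set E : ℝ → ℝ := fun τ => f (y τ) - f xstar + β τ / 2 * ⟪w τ - xstar, w τ - xstar⟫ with hEdef
  -- derivative of E
  set wd : ℝ → V := fun τ => (β τ)⁻¹ • ((μ * α τ) • (y τ - w τ) - α τ • f' (y τ)) with hwddef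
  set E' : ℝ → ℝ := fun τ =>
    α τ * ⟪f' (y τ), w τ - y τ⟫ +
      (β' τ / 2 * ⟪w τ - xstar, w τ - xstar⟫ +
        β τ / 2 * (⟪w τ - xstar, wd τ⟫ + ⟪wd τ, w τ - xstar⟫)) with hE'def
  have hEderiv : ∀ τ ≥ (0 : ℝ), HasDerivAt E (E' τ) τ := by
    intro τ hτ
    have h1 : HasDerivAt (fun t => f (y t) - f xstar)
        (α τ * ⟪f' (y τ), w τ - y τ⟫) τ := by
      have := ((hdiff (y τ)).hasFDerivAt.comp_hasDerivAt τ (hy τ hτ)).sub_const (f xstar)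
      simpa [InnerProductSpace.toDual_apply_apply, inner_smul_right] using this
    have h2 : HasDerivAt (fun t => w t - xstar) (wd τ) τ := (hw τ hτ).sub_const xstar
    have h3 : HasDerivAt (fun t => ⟪w t - xstar, w t - xstar⟫)
        (⟪w τ - xstar, wd τ⟫ + ⟪wd τ, w τ - xstar⟫) τ := h2.inner ℝ h2
    have h4 := ((hβderiv τ hτ).div_const 2).mul h3
    exact h1.add h4
  -- key inequality : α E + E' ≤ 0 for τ ≥ 0
  have hkey : ∀ τ ≥ (0 : ℝ), α τ * E τ + E' τ ≤ 0 := by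
    intro τ hτ
    have hβτ := hβpos τ hτ
    have hατ := hαpos τ hτ
    set a := y τ - xstar with ha
    set b := w τ - xstar with hb
    set g := f' (y τ) with hg
    have hyw : y τ - w τ = a - b := by simp [ha, hb]
    have hwy : w τ - y τ = b - a := by simp [ha, hb]
    -- rewrite β τ * ⟪wd τ, b⟫ etc.
    have hwdval : ⟪wd τ, b⟫ = (β τ)⁻¹ * ((μ * α τ) * (⟪a, b⟫ - ⟪b, b⟫) - α τ * ⟪g, b⟫) := by
      simp [hwddef, inner_smul_left, inner_sub_left, hyw, inner_sub_left]
      left; left; rfl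
    have hwdval' : ⟪b, wd τ⟫ = ⟪wd τ, b⟫ := real_inner_comm _ _
    have hE'val : E' τ = α τ * (⟪g, b⟫ - ⟪g, a⟫) + β' τ / 2 * ⟪b, b⟫ +
        ((μ * α τ) * (⟪a, b⟫ - ⟪b, b⟫) - α τ * ⟪g, b⟫) := by
      rw [hE'def]
      simp only [← ha, ← hb, ← hg, hwy, hwdval', hwdval, inner_sub_right]
      field_simp
      ring
    -- strong convexity at (xstar, y τ)
    have hsc := hconv xstar (y τ)
    have hxy : xstar - y τ = -a := by simp [ha]
    rw [hxy, inner_neg_right, norm_neg] at hsc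
    have hna : ‖a‖ ^ 2 = ⟪a, a⟫ := (real_inner_self_eq_norm_sq a).symm
    rw [hna] at hsc
    -- hsc : f xstar - f (y τ) - (-⟪g, a⟫) ≥ μ / 2 * ⟪a,a⟫
    have hβi := hβineq τ hτ
    have hns : (0:ℝ) ≤ ⟪a - b, a - b⟫ := real_inner_self_nonneg
    have hnsx : ⟪a - b, a - b⟫ = ⟪a, a⟫ - 2 * ⟪a, b⟫ + ⟪b, b⟫ := by
      simp [inner_sub_left, inner_sub_right, real_inner_comm a b]; rw [norm_sub_sq_real]
    rw [hnsx] at hns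
    have hnb : (0:ℝ) ≤ ⟪b, b⟫ := real_inner_self_nonneg
    rw [hE'val, hEdef]
    simp only [← hb]
    nlinarith [mul_le_mul_of_nonneg_left hsc hατ.le,
      mul_le_mul_of_nonneg_right hβi hnb,
      mul_nonneg (mul_nonneg hατ.le hμ) hns]
  -- the function G = exp(A) * E is antitone on [0, ∞)
  set G : ℝ → ℝ := fun τ => Real.exp (A τ) * E τ with hGdef
  have hGderiv : ∀ τ ≥ (0 : ℝ), HasDerivAt G (Real.exp (A τ) * (αt τ * E τ + E' τ)) τ := by
    intro τ hτ
    have h1 : HasDerivAt (fun t => Real.exp (A t)) (Real.exp (A τ) * αt τ) τ :=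
      (hAderiv τ).exp
    have h2 := h1.mul (hEderiv τ hτ)
    refine h2.congr_deriv ?_
    ring
  have hGanti : AntitoneOn G (Set.Ici 0) := by
    apply antitoneOn_of_deriv_nonpos (convex_Ici 0)
    · exact fun τ hτ => ((hGderiv τ hτ).continuousAt).continuousWithinAt
    · intro τ hτ
      rw [interior_Ici] at hτ
      exact ((hGderiv τ (le_of_lt hτ)).differentiableAt).differentiableWithinAt
    · intro τ hτ
      rw [interior_Ici] at hτ
      rw [(hGderiv τ hτ.le).deriv]
      apply mul_nonpos_of_nonneg_of_nonpos (Real.exp_pos _).le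
      rw [hαteq τ hτ.le]
      exact hkey τ hτ.le
  -- conclude
  intro τ hτ
  have hGle : G τ ≤ G 0 := hGanti Set.self_mem_Ici hτ hτ
  have hA0 : A 0 = 0 := by simp [hAdef]
  have hG0 : G 0 = E 0 := by rw [hGdef]; simp [hA0]
  have hAτ : A τ = ∫ s in (0 : ℝ)..τ, α s := by
    apply intervalIntegral.integral_congr
    intro s hs
    rw [Set.uIcc_of_le hτ] at hs
    exact hαteq s hs.1
  have hEτ : E τ = f (y τ) - f xstar + β τ / 2 * ‖w τ - xstar‖ ^ 2 := by
    rw [hEdef]; simp [real_inner_self_eq_norm_sq]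
  have hE0 : E 0 = f (y 0) - f xstar + β 0 / 2 * ‖w 0 - xstar‖ ^ 2 := by
    rw [hEdef]; simp [real_inner_self_eq_norm_sq]
  rw [← hEτ, ← hE0, ← hAτ]
  have hexp : (0:ℝ) < Real.exp (A τ) := Real.exp_pos _
  rw [Real.exp_neg]
  have hGle' : Real.exp (A τ) * E τ ≤ E 0 := by
    have : G τ ≤ E 0 := hG0 ▸ hGle
    simpa [hGdef] using this
  calc E τ = (Real.exp (A τ))⁻¹ * (Real.exp (A τ) * E τ) := by
        field_simp
    _ ≤ (Real.exp (A τ))⁻¹ * E 0 := by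
        apply mul_le_mul_of_nonneg_left hGle' (by positivity)
end

section
/- Let V be a real Hilbert space, μ ≥ 0, and let f : V → ℝ be differentiable and μ-strongly convex, with global minimizer x*. Let γ_0 > 0, and for each k ≥ 0 let α_k > 0, and let (x_k, v_k, γ_k) satisfy the implicit scheme: γ_{k+1} = γ_k + α_k(μ − γ_{k+1}), (x_{k+1} − x_k)/α_k = v_{k+1} − x_{k+1}, and (v_{k+1} − v_k)/α_k = (μ/γ_k)(x_{k+1} − v_{k+1}) − (1/γ_k)∇f(x_{k+1}). Then for every k ≥ 0 the discrete Lyapunov function 𝓛_k = f(x_k) − f(x*) + (γ_k/2)‖v_k − x*‖² satisfies 𝓛_{k+1} ≤ 𝓛_k/(1 + α_k). -/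
open RealInnerProductSpace

theorem stmt6 {V : Type*} [NormedAddCommGroup V] [InnerProductSpace ℝ V] [CompleteSpace V]
    (μ : ℝ) (hμ : 0 ≤ μ) (f : V → ℝ) (f' : V → V)
    (hdiff : ∀ z, HasGradientAt f (f' z) z)
    (hconv : ∀ z w : V, f z - f w - ⟪f' w, z - w⟫ ≥ μ / 2 * ‖z - w‖ ^ 2)
    (xstar : V) (hmin : ∀ z, f xstar ≤ f z)
    (γ α : ℕ → ℝ) (hγ0 : 0 < γ 0) (hα : ∀ k, 0 < α k)
    (x v : ℕ → V)
    (hγrec : ∀ k, γ (k + 1) = γ k + α k * (μ - γ (k + 1)))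
    (hxrec : ∀ k, x (k + 1) - x k = α k • (v (k + 1) - x (k + 1)))
    (hvrec : ∀ k, γ k • (v (k + 1) - v k) =
      α k • (μ • (x (k + 1) - v (k + 1)) - f' (x (k + 1)))) :
    ∀ k : ℕ,
      f (x (k + 1)) - f xstar + γ (k + 1) / 2 * ‖v (k + 1) - xstar‖ ^ 2 ≤
        (f (x k) - f xstar + γ k / 2 * ‖v k - xstar‖ ^ 2) / (1 + α k) := by
  have hγpos : ∀ k, 0 < γ k := by
    intro k
    induction k with
    | zero => exact hγ0
    | succ n ih =>
      have h := hγrec n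
      have ha := hα n
      nlinarith [mul_nonneg ha.le hμ]
  intro k
  have ha := hα k
  have hg := hγpos k
  have hg' := hγpos (k + 1)
  have hγ := hγrec k
  have hx := hxrec k
  have hv := hvrec k
  set a := α k with ha'
  set g := γ k with hg''
  set X := x (k + 1) with hX
  set W := v (k + 1) with hW
  set P := f' X with hP
  have h1 := hconv xstar X
  have h2 := hconv (x k) X
  -- key scalar relation for γ
  have key : (1 + a) * γ (k + 1) = g + a * μ := by linear_combination hγ
  -- bound 1 : f X - f xstar ≤ ⟪P, X - xstar⟫ - μ/2 ‖X - xstar‖²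
  have hB1 : f X - f xstar ≤ ⟪P, X - xstar⟫ - μ / 2 * ‖X - xstar‖ ^ 2 := by
    have e : ⟪P, xstar - X⟫ = -⟪P, X - xstar⟫ := by
      rw [← inner_neg_right]; congr 1; abel
    have e2 : ‖xstar - X‖ = ‖X - xstar‖ := norm_sub_rev _ _
    rw [e, e2] at h1
    linarith
  -- bound 2 : f X - f (x k) ≤ a * ⟪P, W - X⟫
  have hB2 : f X - f (x k) ≤ a * ⟪P, W - X⟫ := by
    have e : ⟪P, x k - X⟫ = -(a * ⟪P, W - X⟫) := by
      have : x k - X = -(a • (W - X)) := by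
        rw [← hx]; abel
      rw [this, inner_neg_right, real_inner_smul_right]
    rw [e] at h2
    nlinarith [sq_nonneg ‖x k - X‖]
  -- expansion of ‖v k - xstar‖²
  have hD : ‖v k - xstar‖ ^ 2 =
      ‖W - xstar‖ ^ 2 - 2 * ⟪W - xstar, W - v k⟫ + ‖W - v k‖ ^ 2 := by
    have e : v k - xstar = (W - xstar) - (W - v k) := by abel
    rw [e, norm_sub_sq_real]
  have hDg : g * ‖v k - xstar‖ ^ 2 =
      g * ‖W - xstar‖ ^ 2 - 2 * (g * ⟪W - xstar, W - v k⟫) + g * ‖W - v k‖ ^ 2 := by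
    rw [hD]; ring
  -- inner product with the v-recursion
  have hgi : g * ⟪W - xstar, W - v k⟫ =
      a * (μ * ⟪W - xstar, X - W⟫ - ⟪W - xstar, P⟫) := by
    have e : ⟪W - xstar, g • (W - v k)⟫ = ⟪W - xstar, a • (μ • (X - W) - P)⟫ := by
      rw [hv]
    simp only [real_inner_smul_right, inner_sub_right] at e ⊢
    linarith
  -- geometric identity
  have hE : ‖X - xstar‖ ^ 2 =
      ‖W - xstar‖ ^ 2 + 2 * ⟪W - xstar, X - W⟫ + ‖X - W‖ ^ 2 := by
    have e : X - xstar = (W - xstar) + (X - W) := by abel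
    rw [e, norm_add_sq_real]
  have hEa : a * μ * ‖X - xstar‖ ^ 2 =
      a * μ * (‖W - xstar‖ ^ 2 + 2 * ⟪W - xstar, X - W⟫ + ‖X - W‖ ^ 2) := by
    rw [hE]
  -- inner product sums
  have hPc : ⟪P, X - xstar⟫ + ⟪P, W - X⟫ = ⟪W - xstar, P⟫ := by
    rw [← inner_add_right, real_inner_comm]
    congr 1; abel
  have hPca : a * (⟪P, X - xstar⟫ + ⟪P, W - X⟫) = a * ⟪W - xstar, P⟫ := by
    rw [hPc]
  -- scaled bound 1
  have hB1a : a * (f X - f xstar) ≤ a * (⟪P, X - xstar⟫ - μ / 2 * ‖X - xstar‖ ^ 2) :=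
    mul_le_mul_of_nonneg_left hB1 ha.le
  -- scale the γ relation by ‖W - xstar‖²
  have keyB : (1 + a) * γ (k + 1) * ‖W - xstar‖ ^ 2 = (g + a * μ) * ‖W - xstar‖ ^ 2 := by
    rw [key]
  have hn1 : 0 ≤ a * μ * ‖X - W‖ ^ 2 := mul_nonneg (mul_nonneg ha.le hμ) (sq_nonneg _)
  have hn2 : 0 ≤ g * ‖W - v k‖ ^ 2 := mul_nonneg hg.le (sq_nonneg _)
  rw [le_div_iff₀ (by linarith : (0:ℝ) < 1 + a)]
  linarith [hn1, hn2, hB1a, hB2, hDg, hgi, hEa, hPca, keyB]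
end

section
/- Let V be a real Hilbert space, 0 ≤ μ ≤ L, and let f ∈ S^{1,1}_{μ,L} with global minimizer x*. Let γ_0 > 0, and for each k ≥ 0 let α_k > 0, and let (x_k, v_k, γ_k) satisfy the Gauss–Seidel splitting scheme: γ_{k+1} = γ_k + α_k(μ − γ_{k+1}), (x_{k+1} − x_k)/α_k = v_k − x_{k+1}, and (v_{k+1} − v_k)/α_k = (μ/γ_k)(x_{k+1} − v_{k+1}) − (1/γ_k)∇f(x_{k+1}). Then for every k ≥ 0, 𝓛_{k+1} − 𝓛_k ≤ −α_k·𝓛_{k+1} + (α_k²/(2γ_k))‖∇f(x_{k+1})‖². -/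
set_option maxHeartbeats 1000000

open RealInnerProductSpace

theorem stmt7 {V : Type*} [NormedAddCommGroup V] [InnerProductSpace ℝ V] [CompleteSpace V]
    (μ L : ℝ) (hμ : 0 ≤ μ) (hμL : μ ≤ L) (f : V → ℝ) (f' : V → V)
    (hdiff : ∀ z, HasGradientAt f (f' z) z)
    (hconv : ∀ z w : V, f z - f w - ⟪f' w, z - w⟫ ≥ μ / 2 * ‖z - w‖ ^ 2)
    (hlip : ∀ z w : V, ‖f' z - f' w‖ ≤ L * ‖z - w‖)
    (xstar : V) (hmin : ∀ z, f xstar ≤ f z)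
    (γ α : ℕ → ℝ) (hγ0 : 0 < γ 0) (hα : ∀ k, 0 < α k)
    (x v : ℕ → V)
    (hγrec : ∀ k, γ (k + 1) = γ k + α k * (μ - γ (k + 1)))
    (hxrec : ∀ k, x (k + 1) - x k = α k • (v k - x (k + 1)))
    (hvrec : ∀ k, γ k • (v (k + 1) - v k) =
      α k • (μ • (x (k + 1) - v (k + 1)) - f' (x (k + 1)))) :
    ∀ k : ℕ,
      (f (x (k + 1)) - f xstar + γ (k + 1) / 2 * ‖v (k + 1) - xstar‖ ^ 2) -
        (f (x k) - f xstar + γ k / 2 * ‖v k - xstar‖ ^ 2) ≤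
      -(α k) * (f (x (k + 1)) - f xstar + γ (k + 1) / 2 * ‖v (k + 1) - xstar‖ ^ 2) +
        (α k) ^ 2 / (2 * γ k) * ‖f' (x (k + 1))‖ ^ 2 := by
  have hγpos : ∀ k, 0 < γ k := by
    intro k
    induction k with
    | zero => exact hγ0
    | succ n ih =>
      have h := hγrec n
      nlinarith [hα n, mul_nonneg (hα n).le hμ]
  intro k
  have hapos := hα k
  have hgpos := hγpos k
  set a := α k with ha
  set g := γ k with hgdef
  set g' := γ (k+1) with hg'def
  set G := f' (x (k+1)) with hGdef
  set p := x (k+1) - xstar with hpdef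
  set q := v (k+1) - xstar with hqdef
  set r := v k - xstar with hrdef
  have hgg : (1+a) * g' = g + a * μ := by linear_combination hγrec k
  have hx : x k - x (k+1) = a • (p - r) := by
    rw [hpdef, hrdef]
    linear_combination (norm := module) - hxrec k
  have hv : g • (q - r) = a • (μ • (p - q) - G) := by
    rw [hpdef, hqdef, hrdef, hGdef]
    linear_combination (norm := module) hvrec k
  -- scalar consequences
  have hEr := congrArg (fun z => (inner ℝ z r : ℝ)) hv
  have hEu := congrArg (fun z => (inner ℝ z (p - q) : ℝ)) hv
  have hEn1 := congrArg (fun z => (inner ℝ z (q - r) : ℝ)) hv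
  have hEn2 := congrArg (fun z => (inner ℝ (μ • (p - q) - G) z : ℝ)) hv
  have h1 := hconv (x k) (x (k+1))
  rw [hx] at h1
  have h2 := hconv xstar (x (k+1))
  have e2 : xstar - x (k+1) = -p := by rw [hpdef]; abel
  rw [e2] at h2
  simp only [inner_sub_left, inner_sub_right, real_inner_smul_left, real_inner_smul_right,
    inner_neg_right, norm_neg, norm_smul, Real.norm_eq_abs, mul_pow, sq_abs,
    norm_sub_sq_real, real_inner_self_eq_norm_sq,
    real_inner_comm q p, real_inner_comm r p, real_inner_comm r q,
    real_inner_comm p G, real_inner_comm q G, real_inner_comm r G, ← hGdef]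
    at hEr hEu hEn1 hEn2 h1 h2
  -- premultiplied facts
  have hg2 : (0:ℝ) ≤ 2*g := by linarith
  have P1 := mul_le_mul_of_nonneg_left h1 hg2
  have P2 := mul_le_mul_of_nonneg_left h2 (show (0:ℝ) ≤ 2*a*g by positivity)
  have E1 := congrArg (fun t => 2*g*t) hEr
  have E2 := congrArg (fun t => g*t) hEn1
  have E3 := congrArg (fun t => a*t) hEn2
  have E4 := congrArg (fun t => (2*a*μ)*t) hEu
  beta_reduce at P1 P2 E1 E2 E3 E4
  have hUpq : (0:ℝ) ≤ ‖p‖^2 - 2*⟪q,p⟫ + ‖q‖^2 := by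
    have h := sq_nonneg ‖p - q‖
    rw [norm_sub_sq_real] at h; linarith [real_inner_comm p q]
  have hUpr : (0:ℝ) ≤ ‖p‖^2 - 2*⟪r,p⟫ + ‖r‖^2 := by
    have h := sq_nonneg ‖p - r‖
    rw [norm_sub_sq_real] at h; linarith [real_inner_comm p r]
  have N1 : (0:ℝ) ≤ (a*μ*g + a^2*μ^2) * (‖p‖^2 - 2*⟪q,p⟫ + ‖q‖^2) := by
    apply mul_nonneg (by positivity) hUpq
  have N2 : (0:ℝ) ≤ (μ*a^2*g) * (‖p‖^2 - 2*⟪r,p⟫ + ‖r‖^2) := by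
    apply mul_nonneg (by positivity) hUpr
  have main : 2*g*(1+a)*(f (x (k+1)) - f xstar) - 2*g*(f (x k) - f xstar)
      + g*(g+a*μ)*‖q‖^2 - g^2*‖r‖^2 - a^2*‖G‖^2 ≤ 0 := by
    linarith [P1, P2, E1, E2, E3, E4, N1, N2]
  have hsub : (1+a)*(g'/2*‖q‖^2) = (g+a*μ)/2*‖q‖^2 := by
    linear_combination (‖q‖^2/2) * hgg
  have hden : (0:ℝ) < 2*g := by linarith
  have heq : (1+a)*(f (x (k+1)) - f xstar) + (g+a*μ)/2*‖q‖^2 - (f (x k) - f xstar)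
      - g/2*‖r‖^2 - a^2/(2*g)*‖G‖^2
      = (2*g*(1+a)*(f (x (k+1)) - f xstar) - 2*g*(f (x k) - f xstar)
        + g*(g+a*μ)*‖q‖^2 - g^2*‖r‖^2 - a^2*‖G‖^2) / (2*g) := by
    field_simp
    ring
  have hfin : (1+a)*(f (x (k+1)) - f xstar) + (g+a*μ)/2*‖q‖^2 - (f (x k) - f xstar)
      - g/2*‖r‖^2 - a^2/(2*g)*‖G‖^2 ≤ 0 := by
    rw [heq]
    exact div_nonpos_of_nonpos_of_nonneg main hg2
  nlinarith [hfin, hsub]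
end

section
/- Let V be a real Hilbert space, 0 ≤ μ ≤ L, and let f ∈ S^{1,1}_{μ,L} with global minimizer x*. Let γ_0 > 0, and for each k ≥ 0 let α_k > 0 satisfy L·α_k² = γ_k(1 + α_k), and let (x_k, y_k, v_k, γ_k) satisfy: γ_{k+1} = γ_k + α_k(μ − γ_{k+1}), (y_k − x_k)/α_k = v_k − y_k, (v_{k+1} − v_k)/α_k = (μ/γ_k)(y_k − v_{k+1}) − (1/γ_k)∇f(y_k), and x_{k+1} = y_k − (1/L)∇f(y_k). Then for every k ≥ 0, 𝓛_{k+1} ≤ 𝓛_k/(1 + α_k). -/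
open RealInnerProductSpace

private lemma smooth_upper {V : Type*} [NormedAddCommGroup V] [InnerProductSpace ℝ V]
    [CompleteSpace V]
    {L : ℝ} (hL : 0 ≤ L) {f : V → ℝ} {f' : V → V}
    (hdiff : ∀ z, HasGradientAt f (f' z) z)
    (hlip : ∀ z w : V, ‖f' z - f' w‖ ≤ L * ‖z - w‖) (z w : V) :
    f z ≤ f w + ⟪f' w, z - w⟫ + L / 2 * ‖z - w‖ ^ 2 := by
  set d := z - w with hd
  have hcont : Continuous f' := by
    have : LipschitzWith (Real.toNNReal L) f' := by
      apply LipschitzWith.of_dist_le_mul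
      intro a b
      rw [dist_eq_norm, dist_eq_norm, Real.coe_toNNReal L hL]
      exact hlip a b
    exact this.continuous
  have hline : ∀ t : ℝ, HasDerivAt (fun t : ℝ => w + t • d) d t := by
    intro t
    simpa using ((hasDerivAt_id t).smul_const d).const_add w
  have hphi : ∀ t : ℝ, HasDerivAt (fun t : ℝ => f (w + t • d)) ⟪f' (w + t • d), d⟫ t := by
    intro t
    have h1 : HasFDerivAt f (InnerProductSpace.toDual ℝ V (f' (w + t • d))) (w + t • d) :=
      hdiff _
    have h2 := h1.comp_hasDerivAt t (hline t)
    simp at h2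
    exact h2
  have hcont2 : Continuous fun t : ℝ => ⟪f' (w + t • d), d⟫ := by
    exact Continuous.inner (hcont.comp (by continuity)) continuous_const
  have hint : IntervalIntegrable (fun t : ℝ => ⟪f' (w + t • d), d⟫)
      MeasureTheory.volume 0 1 := hcont2.intervalIntegrable 0 1
  have heq : f z - f w = ∫ t in (0:ℝ)..1, ⟪f' (w + t • d), d⟫ := by
    have h := intervalIntegral.integral_eq_sub_of_hasDerivAt
      (f := fun t : ℝ => f (w + t • d)) (fun t _ => hphi t) hint
    rw [h]
    norm_num [hd]
  have hle : ∀ t ∈ Set.Icc (0:ℝ) 1,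
      ⟪f' (w + t • d), d⟫ ≤ ⟪f' w, d⟫ + L * ‖d‖ ^ 2 * t := by
    intro t ht
    have h1 : ⟪f' (w + t • d) - f' w, d⟫ ≤ ‖f' (w + t • d) - f' w‖ * ‖d‖ :=
      real_inner_le_norm _ _
    have h2 : ‖f' (w + t • d) - f' w‖ ≤ L * (t * ‖d‖) := by
      have h3 := hlip (w + t • d) w
      simpa [norm_smul, abs_of_nonneg ht.1] using h3
    have h4 : ⟪f' (w + t • d), d⟫ - ⟪f' w, d⟫ ≤ L * (t * ‖d‖) * ‖d‖ := by
      rw [← inner_sub_left]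
      exact h1.trans (mul_le_mul_of_nonneg_right h2 (norm_nonneg d))
    nlinarith [sq_nonneg ‖d‖]
  have hint2 : IntervalIntegrable (fun t : ℝ => ⟪f' w, d⟫ + L * ‖d‖ ^ 2 * t)
      MeasureTheory.volume 0 1 := by
    apply Continuous.intervalIntegrable
    continuity
  have hmono := intervalIntegral.integral_mono_on (μ := MeasureTheory.volume)
    zero_le_one hint hint2 hle
  have hval : ∫ t in (0:ℝ)..1, (⟪f' w, d⟫ + L * ‖d‖ ^ 2 * t)
      = ⟪f' w, d⟫ + L / 2 * ‖d‖ ^ 2 := by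
    rw [intervalIntegral.integral_add (intervalIntegrable_const)
      (by apply Continuous.intervalIntegrable; continuity)]
    rw [intervalIntegral.integral_const_mul]
    simp
    ring
  rw [hval] at hmono
  linarith [heq]

set_option maxHeartbeats 1000000 in
theorem stmt8 {V : Type*} [NormedAddCommGroup V] [InnerProductSpace ℝ V] [CompleteSpace V]
    (μ L : ℝ) (hμ : 0 ≤ μ) (hμL : μ ≤ L) (f : V → ℝ) (f' : V → V)
    (hdiff : ∀ z, HasGradientAt f (f' z) z)
    (hconv : ∀ z w : V, f z - f w - ⟪f' w, z - w⟫ ≥ μ / 2 * ‖z - w‖ ^ 2)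
    (hlip : ∀ z w : V, ‖f' z - f' w‖ ≤ L * ‖z - w‖)
    (xstar : V) (hmin : ∀ z, f xstar ≤ f z)
    (γ α : ℕ → ℝ) (hγ0 : 0 < γ 0) (hα : ∀ k, 0 < α k)
    (hstep : ∀ k, L * (α k) ^ 2 = γ k * (1 + α k))
    (x y v : ℕ → V)
    (hγrec : ∀ k, γ (k + 1) = γ k + α k * (μ - γ (k + 1)))
    (hyrec : ∀ k, y k - x k = α k • (v k - y k))
    (hvrec : ∀ k, γ k • (v (k + 1) - v k) = α k • (μ • (y k - v (k + 1)) - f' (y k)))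
    (hxrec : ∀ k, x (k + 1) = y k - (1 / L) • f' (y k)) :
    ∀ k : ℕ,
      f (x (k + 1)) - f xstar + γ (k + 1) / 2 * ‖v (k + 1) - xstar‖ ^ 2 ≤
        (f (x k) - f xstar + γ k / 2 * ‖v k - xstar‖ ^ 2) / (1 + α k) := by
  -- positivity of γ
  have hγpos : ∀ k, 0 < γ k := by
    intro k
    induction k with
    | zero => exact hγ0
    | succ n ih =>
      have h1 := hγrec n
      have h2 : γ (n + 1) * (1 + α n) = γ n + α n * μ := by linarith [h1]
      have h3 : 0 < 1 + α n := by linarith [hα n]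
      have h4 : 0 < γ n + α n * μ := by
        have := mul_nonneg (hα n).le hμ
        linarith
      nlinarith
  have hL : 0 < L := by
    have h1 := hstep 0
    have h2 : 0 < γ 0 * (1 + α 0) := mul_pos hγ0 (by linarith [hα 0])
    nlinarith [pow_pos (hα 0) 2]
  intro k
  set a := α k with ha_def
  set G := γ k with hG_def
  set g := f' (y k) with hg_def
  set p := v k - xstar with hp_def
  set q := y k - xstar with hq_def
  have ha : 0 < a := hα k
  have hG : 0 < G := hγpos k
  have h1a : 0 < 1 + a := by linarith
  have hs : 0 < G + a * μ := by positivity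
  have hG' : γ (k + 1) * (1 + a) = G + a * μ := by
    have h := hγrec k
    rw [← ha_def, ← hG_def] at h
    linarith
  have hLa : L * a ^ 2 = G * (1 + a) := by
    have h := hstep k
    rw [← ha_def, ← hG_def] at h
    exact h
  -- key vector identity for v (k+1)
  have key : (G + a * μ) • (v (k + 1) - xstar) = G • p + (a * μ) • q - a • g := by
    have h1 := hvrec k
    rw [← ha_def, ← hG_def, ← hg_def] at h1
    have h2 : (G + a * μ) • (v (k + 1) - xstar) - (G • p + (a * μ) • q - a • g)
        = G • (v (k + 1) - v k) - a • (μ • (y k - v (k + 1)) - g) := by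
      rw [hp_def, hq_def]
      module
    have h3 : G • (v (k + 1) - v k) - a • (μ • (y k - v (k + 1)) - g) = 0 := by
      rw [h1, sub_self]
    exact sub_eq_zero.mp (h2.trans h3)
  -- scalar expansions
  have e2 : ‖p - q‖ ^ 2 = ‖p‖ ^ 2 + ‖q‖ ^ 2 - 2 * ⟪p, q⟫ := by
    rw [norm_sub_sq_real]; ring
  have eqW : (G + a * μ) ^ 2 * ‖v (k + 1) - xstar‖ ^ 2
      = G ^ 2 * ‖p‖ ^ 2 + (a * μ) ^ 2 * ‖q‖ ^ 2 + a ^ 2 * ‖g‖ ^ 2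
        + 2 * (G * (a * μ)) * ⟪p, q⟫ - 2 * (G * a) * ⟪g, p⟫ - 2 * (a * a * μ) * ⟪g, q⟫ := by
    have e4 : ‖(G + a * μ) • (v (k + 1) - xstar)‖ ^ 2
        = (G + a * μ) ^ 2 * ‖v (k + 1) - xstar‖ ^ 2 := by
      rw [norm_smul, Real.norm_eq_abs, abs_of_pos hs, mul_pow]
    have e5 : ‖G • p + (a * μ) • q - a • g‖ ^ 2
        = ⟪G • p + (a * μ) • q - a • g, G • p + (a * μ) • q - a • g⟫ :=
      (real_inner_self_eq_norm_sq _).symm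
    simp only [inner_add_left, inner_add_right, inner_sub_left, inner_sub_right,
      real_inner_smul_left, real_inner_smul_right] at e5
    simp only [real_inner_comm g p, real_inner_comm g q, real_inner_comm p q] at e5
    simp only [real_inner_self_eq_norm_sq] at e5
    have e6 : ‖(G + a * μ) • (v (k + 1) - xstar)‖ ^ 2
        = ‖G • p + (a * μ) • q - a • g‖ ^ 2 := by rw [key]
    rw [e4, e5] at e6
    linear_combination e6
  have eqS : ‖a • g - G • (p - q)‖ ^ 2
      = a ^ 2 * ‖g‖ ^ 2 - 2 * (a * G) * (⟪g, p⟫ - ⟪g, q⟫)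
        + G ^ 2 * (‖p‖ ^ 2 + ‖q‖ ^ 2 - 2 * ⟪p, q⟫) := by
    have e3 : ‖a • g - G • (p - q)‖ ^ 2 = ⟪a • g - G • (p - q), a • g - G • (p - q)⟫ :=
      (real_inner_self_eq_norm_sq _).symm
    simp only [inner_sub_left, inner_sub_right, real_inner_smul_left,
      real_inner_smul_right] at e3
    simp only [real_inner_comm g p, real_inner_comm g q, real_inner_comm p q] at e3
    simp only [real_inner_self_eq_norm_sq] at e3
    linear_combination e3
  -- descent step
  have hxy1 : x (k + 1) - y k = -((1 / L) • g) := by rw [hxrec k, ← hg_def]; abel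
  have hd1 : f (x (k + 1)) ≤ f (y k) - 1 / (2 * L) * ‖g‖ ^ 2 := by
    have hsm := smooth_upper hL.le hdiff hlip (x (k + 1)) (y k)
    rw [← hg_def, hxy1] at hsm
    rw [inner_neg_right, real_inner_smul_right, real_inner_self_eq_norm_sq, norm_neg,
      norm_smul, Real.norm_eq_abs, abs_of_pos (by positivity : (0:ℝ) < 1 / L)] at hsm
    have hL' : L ≠ 0 := ne_of_gt hL
    have heq : f (y k) + -(1 / L * ‖g‖ ^ 2) + L / 2 * (1 / L * ‖g‖) ^ 2
        = f (y k) - 1 / (2 * L) * ‖g‖ ^ 2 := by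
      field_simp
      ring
    linarith [hsm, heq]
  have hD : a ^ 2 * ‖g‖ ^ 2 ≤ 2 * (G * (1 + a)) * (f (y k) - f (x (k + 1))) := by
    have h7 : 1 / (2 * L) * ‖g‖ ^ 2 ≤ f (y k) - f (x (k + 1)) := by linarith
    have h8 := mul_le_mul_of_nonneg_left h7 (show (0:ℝ) ≤ 2 * L * a ^ 2 by positivity)
    have hL' : L ≠ 0 := ne_of_gt hL
    have h9 : 2 * L * a ^ 2 * (1 / (2 * L) * ‖g‖ ^ 2) = a ^ 2 * ‖g‖ ^ 2 := by
      field_simp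
    have h10 : 2 * L * a ^ 2 * (f (y k) - f (x (k + 1)))
        = 2 * (G * (1 + a)) * (f (y k) - f (x (k + 1))) := by
      linear_combination 2 * (f (y k) - f (x (k + 1))) * hLa
    linarith
  -- convexity inequalities
  have hxy : x k - y k = -(a • (p - q)) := by
    have h1 := hyrec k
    rw [← ha_def] at h1
    have h2 : p - q = v k - y k := by rw [hp_def, hq_def]; abel
    rw [h2, ← h1]
    exact (neg_sub _ _).symm
  have hA' : μ / 2 * (a ^ 2 * (‖p‖ ^ 2 + ‖q‖ ^ 2 - 2 * ⟪p, q⟫))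
      ≤ f (x k) - f (y k) + a * (⟪g, p⟫ - ⟪g, q⟫) := by
    have hA := hconv (x k) (y k)
    rw [← hg_def] at hA
    have i1 : ⟪g, x k - y k⟫ = -(a * (⟪g, p⟫ - ⟪g, q⟫)) := by
      rw [hxy, inner_neg_right, real_inner_smul_right, inner_sub_right]
    have i2 : ‖x k - y k‖ ^ 2 = a ^ 2 * (‖p‖ ^ 2 + ‖q‖ ^ 2 - 2 * ⟪p, q⟫) := by
      rw [hxy, norm_neg, norm_smul, Real.norm_eq_abs, abs_of_pos ha, mul_pow, e2]
    rw [i1, i2] at hA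
    linarith
  have hB' : μ / 2 * ‖q‖ ^ 2 ≤ f xstar - f (y k) + ⟪g, q⟫ := by
    have hB := hconv xstar (y k)
    rw [← hg_def] at hB
    have i3 : xstar - y k = -q := by rw [hq_def]; abel
    rw [i3, inner_neg_right, norm_neg] at hB
    linarith
  -- assemble
  rw [le_div_iff₀ h1a]
  have hpos : (0:ℝ) < 2 * (G + a * μ) * G := by positivity
  rw [← mul_le_mul_iff_right₀ hpos]
  have T1 := mul_le_mul_of_nonneg_left hD hs.le
  have T2 := mul_le_mul_of_nonneg_left hA'
    (show (0:ℝ) ≤ 2 * (G + a * μ) * G by positivity)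
  have T3 := mul_le_mul_of_nonneg_left hB'
    (show (0:ℝ) ≤ 2 * (G + a * μ) * G * a by positivity)
  have T4 : (0:ℝ) ≤ μ * a * (a ^ 2 * ‖g‖ ^ 2 - 2 * (a * G) * (⟪g, p⟫ - ⟪g, q⟫)
      + G ^ 2 * (‖p‖ ^ 2 + ‖q‖ ^ 2 - 2 * ⟪p, q⟫)) := by
    rw [← eqS]
    positivity
  have T5 : (0:ℝ) ≤ μ * G * (G + a * μ) * a ^ 2 * (‖p‖ ^ 2 + ‖q‖ ^ 2 - 2 * ⟪p, q⟫) := by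
    have hNp : (0:ℝ) ≤ ‖p‖ ^ 2 + ‖q‖ ^ 2 - 2 * ⟪p, q⟫ := by rw [← e2]; positivity
    have : (0:ℝ) ≤ μ * G * (G + a * μ) * a ^ 2 := by positivity
    exact mul_nonneg this hNp
  have eqBig : 2 * (G + a * μ) * G * (γ (k + 1) / 2 * ‖v (k + 1) - xstar‖ ^ 2 * (1 + a))
      = G * (G ^ 2 * ‖p‖ ^ 2 + (a * μ) ^ 2 * ‖q‖ ^ 2 + a ^ 2 * ‖g‖ ^ 2
        + 2 * (G * (a * μ)) * ⟪p, q⟫ - 2 * (G * a) * ⟪g, p⟫ - 2 * (a * a * μ) * ⟪g, q⟫) := by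
    linear_combination ((G + a * μ) * G * ‖v (k + 1) - xstar‖ ^ 2) * hG' + G * eqW
  nlinarith [T1, T2, T3, T4, T5, eqBig]
end

section
/- Let V be a real Hilbert space, 0 ≤ μ ≤ L with L > 0, and let f ∈ S^{1,1}_{μ,L} with global minimizer x*. Let γ_0 > 0, and for each k ≥ 0 let α_k > 0 satisfy L·α_k² = γ_k(1 + α_k), and let (x_k, y_k, v_k, γ_k) satisfy: γ_{k+1} = γ_k + α_k(μ − γ_{k+1}), (y_k − x_k)/α_k = v_k − y_k, (v_{k+1} − v_k)/α_k = (μ/γ_k)(y_k − v_{k+1}) − (1/γ_k)∇f(y_k), and x_{k+1} = y_k − (1/L)∇f(y_k). Then for all k ≥ 0: 𝓛_k ≤ 𝓛_0 · min{ 4L/(√γ_0·k + 2√L)², (1 + √(min{γ_0, μ}/L))^{−k} }. Moreover, if γ_0 ≥ L, then for all k ≥ 1: 𝓛_k ≤ (f(x_0) − f(x*) + (L/2)‖v_0 − x*‖²) · min{ 4/k², (1 + √(μ/L))^{1−k} }. -/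
open RealInnerProductSpace

lemma descent_lemma {V : Type*} [NormedAddCommGroup V] [InnerProductSpace ℝ V] [CompleteSpace V]
    (L : ℝ) (hL : 0 < L) (f : V → ℝ) (f' : V → V)
    (hdiff : ∀ z, HasGradientAt f (f' z) z)
    (hlip : ∀ z w : V, ‖f' z - f' w‖ ≤ L * ‖z - w‖) (z w : V) :
    f z ≤ f w + ⟪f' w, z - w⟫ + L / 2 * ‖z - w‖ ^ 2 := by
  set d := z - w with hd
  have hder : ∀ t : ℝ, HasDerivAt (fun s : ℝ => f (w + s • d)) ⟪f' (w + t • d), d⟫ t := by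
    intro t
    have h1 : HasDerivAt (fun s : ℝ => w + s • d) d t := by
      simpa using ((hasDerivAt_id t).smul_const d).const_add w
    have h2 := (hdiff (w + t • d)).hasFDerivAt.comp_hasDerivAt t h1
    simpa [InnerProductSpace.toDual_apply_apply, Function.comp_def] using h2
  set φ : ℝ → ℝ := fun t => f (w + t • d) - t * ⟪f' w, d⟫ - L / 2 * ‖d‖ ^ 2 * t ^ 2 with hφ
  have hφder : ∀ t : ℝ, HasDerivAt φ
      (⟪f' (w + t • d), d⟫ - ⟪f' w, d⟫ - L / 2 * ‖d‖ ^ 2 * (2 * t)) t := by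
    intro t
    have h3 : HasDerivAt (fun s : ℝ => s * ⟪f' w, d⟫) ⟪f' w, d⟫ t := by
      simpa using (hasDerivAt_id t).mul_const (⟪f' w, d⟫ : ℝ)
    have h4 : HasDerivAt (fun s : ℝ => L / 2 * ‖d‖ ^ 2 * s ^ 2) (L / 2 * ‖d‖ ^ 2 * (2 * t)) t := by
      have := (hasDerivAt_pow 2 t).const_mul (L / 2 * ‖d‖ ^ 2)
      exact this.congr_deriv (by push_cast; ring)
    exact ((hder t).sub h3).sub h4
  have hmono : AntitoneOn φ (Set.Icc (0:ℝ) 1) := by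
    apply antitoneOn_of_deriv_nonpos (convex_Icc 0 1)
    · exact fun t _ => ((hφder t).differentiableAt.continuousAt).continuousWithinAt
    · exact fun t _ => ((hφder t).differentiableAt).differentiableWithinAt
    · intro t ht
      rw [interior_Icc] at ht
      rw [(hφder t).deriv]
      have hin : ⟪f' (w + t • d) - f' w, d⟫ ≤ ‖f' (w + t • d) - f' w‖ * ‖d‖ :=
        real_inner_le_norm _ _
      have hlip' : ‖f' (w + t • d) - f' w‖ ≤ L * (t * ‖d‖) := by
        have := hlip (w + t • d) w
        simpa [norm_smul, abs_of_pos ht.1] using this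
      have h5 : ⟪f' (w + t • d), d⟫ - ⟪f' w, d⟫ ≤ L * (t * ‖d‖) * ‖d‖ := by
        rw [← inner_sub_left]
        calc ⟪f' (w + t • d) - f' w, d⟫ ≤ ‖f' (w + t • d) - f' w‖ * ‖d‖ := hin
        _ ≤ L * (t * ‖d‖) * ‖d‖ := by
            apply mul_le_mul_of_nonneg_right hlip' (norm_nonneg _)
      nlinarith [sq_nonneg ‖d‖]
  have h01 : φ 1 ≤ φ 0 := hmono (Set.mem_Icc.2 ⟨le_refl 0, zero_le_one⟩)
    (Set.mem_Icc.2 ⟨zero_le_one, le_refl 1⟩) zero_le_one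
  have e1 : w + (1:ℝ) • d = z := by rw [hd]; simp
  have e0 : w + (0:ℝ) • d = w := by simp
  rw [hφ] at h01
  simp only [e1, e0, one_mul, one_pow, mul_one, zero_mul, sub_zero, mul_zero,
    ne_eq, OfNat.ofNat_ne_zero, not_false_eq_true, zero_pow] at h01
  linarith


set_option maxHeartbeats 1000000 in
lemma onestep_lemma {V : Type*} [NormedAddCommGroup V] [InnerProductSpace ℝ V]
    (μ L : ℝ) (hμ : 0 ≤ μ) (hL : 0 < L) (f : V → ℝ) (f' : V → V)
    (hconv : ∀ z w : V, f z - f w - ⟪f' w, z - w⟫ ≥ μ / 2 * ‖z - w‖ ^ 2)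
    (hdescent : ∀ z w : V, f z ≤ f w + ⟪f' w, z - w⟫ + L / 2 * ‖z - w‖ ^ 2)
    (xstar : V) (a gk g1 : ℝ) (ha : 0 < a) (hgk : 0 < gk)
    (hstep : L * a ^ 2 = gk * (1 + a))
    (xk xk1 yk vk vk1 : V)
    (hγrec : g1 = gk + a * (μ - g1))
    (hyrec : yk - xk = a • (vk - yk))
    (hvrec : gk • (vk1 - vk) = a • (μ • (yk - vk1) - f' yk))
    (hxrec : xk1 = yk - (1 / L) • f' yk) :
    (1 + a) * (f xk1 - f xstar + g1 / 2 * ‖vk1 - xstar‖ ^ 2) ≤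
      f xk - f xstar + gk / 2 * ‖vk - xstar‖ ^ 2 := by
  obtain ⟨p, hp⟩ : ∃ p, p = yk - xstar := ⟨_, rfl⟩
  obtain ⟨q, hq⟩ : ∃ q, q = vk - xstar := ⟨_, rfl⟩
  obtain ⟨e, he⟩ : ∃ e, e = vk1 - xstar := ⟨_, rfl⟩
  obtain ⟨g, hg⟩ : ∃ g, g = f' yk := ⟨_, rfl⟩
  rw [← he, ← hq]
  -- key vector identity
  have hkey : (gk + a * μ) • e = gk • q + (a * μ) • p - a • g := by
    rw [hp, hq, he, hg]; linear_combination (norm := module) hvrec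
  -- h4 : expansion of norms
  have h4 : (gk + a * μ)^2 * ‖e‖^2 =
      gk^2*‖q‖^2 + a^2*μ^2*‖p‖^2 + a^2*‖g‖^2
      + 2*gk*a*μ*⟪p,q⟫ - 2*gk*a*⟪g,q⟫ - 2*a^2*μ*⟪g,p⟫ := by
    have h := congrArg (fun z : V => (⟪z, z⟫ : ℝ)) hkey
    have e1 : ‖(gk+a*μ) • e‖^2 = (gk+a*μ)^2*‖e‖^2 := by
      rw [norm_smul]; simp [mul_pow, sq_abs]
    have e2 : ‖gk • q‖^2 = gk^2*‖q‖^2 := by rw [norm_smul]; simp [mul_pow, sq_abs]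
    have e3 : ‖(a*μ) • p‖^2 = a^2*μ^2*‖p‖^2 := by
      rw [norm_smul]; simp [mul_pow, sq_abs]
    have e4 : ‖a • g‖^2 = a^2*‖g‖^2 := by rw [norm_smul]; simp [mul_pow, sq_abs]
    simp only [inner_sub_left, inner_sub_right, inner_add_left, inner_add_right,
      real_inner_smul_left, real_inner_smul_right, real_inner_self_eq_norm_sq,
      e1, e2, e3, e4] at h
    linear_combination h + (gk*a*μ) * (real_inner_comm p q) -
      (gk*a) * (real_inner_comm g q) - (a^2*μ) * (real_inner_comm g p)
  -- S1 : descent step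
  have hS1 : f xk1 ≤ f yk - 1/(2*L) * ‖g‖^2 := by
    have h := hdescent xk1 yk
    have hxy : xk1 - yk = (-(1/L)) • g := by rw [hxrec, hg]; module
    rw [hxy, ← hg] at h
    rw [real_inner_smul_right, real_inner_self_eq_norm_sq, norm_smul] at h
    simp only [Real.norm_eq_abs, abs_neg, abs_div, abs_one, abs_of_pos hL] at h
    have heq : f yk + -(1/L) * ‖g‖^2 + L/2 * ((1/L) * ‖g‖)^2
        = f yk - 1/(2*L) * ‖g‖^2 := by
      field_simp
      ring
    linarith [h, heq]
  -- S2 : convexity at (xstar, yk)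
  have hS2 : f xstar - f yk + ⟪g, p⟫ - μ/2*‖p‖^2 ≥ 0 := by
    have h := hconv xstar yk
    have e : xstar - yk = -p := by rw [hp]; abel
    rw [e, inner_neg_right, norm_neg, ← hg] at h
    linarith
  -- S3 : convexity at (xk, yk)
  have hS3 : f xk - f yk - a*(⟪g,p⟫ - ⟪g,q⟫)
      - μ/2*(a^2*(‖p‖^2 - 2*⟪p,q⟫ + ‖q‖^2)) ≥ 0 := by
    have h := hconv xk yk
    have hxky : xk - yk = a • (p - q) := by
      rw [hp, hq]; linear_combination (norm := module) -hyrec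
    rw [hxky, real_inner_smul_right, inner_sub_right, norm_smul, ← hg] at h
    simp only [Real.norm_eq_abs, mul_pow, sq_abs] at h
    rw [norm_sub_sq_real] at h
    linarith
  -- B ≥ 0 : Cauchy-Schwarz quadratic
  have hB : 0 ≤ (1+a)*‖g‖^2 + 2*a*L*(⟪g,p⟫ - ⟪g,q⟫)
      + a^2*L*(L+μ)*(‖p‖^2 + ‖q‖^2 - 2*⟪p,q⟫) := by
    have hcs : -(‖g‖ * ‖p - q‖) ≤ ⟪g, p - q⟫ :=
      neg_le_of_abs_le (abs_real_inner_le_norm _ _)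
    have hpq2 : ‖p - q‖^2 = ‖p‖^2 - 2*⟪p,q⟫ + ‖q‖^2 := norm_sub_sq_real _ _
    have hinn : ⟪g, p - q⟫ = ⟪g,p⟫ - ⟪g,q⟫ := inner_sub_right _ _ _
    have hsc : 0 ≤ (1+a)*‖g‖^2 + 2*a*L*⟪g, p - q⟫ + a^2*L*(L+μ)*‖p - q‖^2 := by
      have h1a : (0:ℝ) < 1 + a := by linarith
      have key : 0 ≤ (1+a) * ((1+a)*‖g‖^2 + 2*a*L*⟪g, p - q⟫
          + a^2*L*(L+μ)*‖p - q‖^2) := by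
        nlinarith [sq_nonneg ((1+a)*‖g‖ - a*L*‖p - q‖),
          mul_pos ha hL, sq_nonneg ‖p - q‖,
          mul_nonneg (mul_nonneg (mul_nonneg ha.le ha.le) (mul_nonneg hL.le hμ))
            (sq_nonneg ‖p - q‖),
          mul_nonneg (mul_nonneg (mul_nonneg (mul_nonneg ha.le ha.le) ha.le) hL.le)
            (sq_nonneg ‖p - q‖),
          mul_nonneg (mul_nonneg (mul_nonneg (mul_nonneg ha.le ha.le) ha.le)
            (mul_nonneg hL.le hμ)) (sq_nonneg ‖p - q‖),
          mul_le_mul_of_nonneg_left hcs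
            (mul_nonneg (mul_nonneg (by norm_num : (0:ℝ) ≤ 2) ha.le) hL.le)]
      exact (mul_nonneg_iff_of_pos_left h1a).mp key
    rw [hinn, hpq2] at hsc
    linarith
  -- scalar form of gamma recursion
  have hγ' : g1 * (1 + a) = gk + a * μ := by linarith [hγrec]
  have hgam : 0 < gk + a * μ := by nlinarith
  -- the master identity
  have hID : 2*L*(gk+a*μ) * ((f xk - f xstar + gk/2*‖q‖^2)
        - (1+a)*(f xk1 - f xstar) - (gk+a*μ)/2*‖e‖^2)
      = 2*L*(gk+a*μ)*((1+a)*(f yk - 1/(2*L)*‖g‖^2 - f xk1)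
          + a*(f xstar - f yk + ⟪g,p⟫ - μ/2*‖p‖^2)
          + (f xk - f yk - a*(⟪g,p⟫ - ⟪g,q⟫)
             - μ/2*(a^2*(‖p‖^2 - 2*⟪p,q⟫ + ‖q‖^2))))
        + a*μ*((1+a)*‖g‖^2 + 2*a*L*(⟪g,p⟫ - ⟪g,q⟫)
          + a^2*L*(L+μ)*(‖p‖^2 + ‖q‖^2 - 2*⟪p,q⟫)) := by
    have hLinv : L * L⁻¹ = 1 := mul_inv_cancel₀ (ne_of_gt hL)
    linear_combination (-L)*h4 + (-‖g‖^2 - a*μ*L*(‖p‖^2 + ‖q‖^2 - 2*⟪p,q⟫))*hstep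
      + ((gk*a + gk + a*μ + a^2*μ)*‖g‖^2)*hLinv
  -- conclude
  have hc : 0 < 2*L*(gk+a*μ) := by positivity
  have hsum : 0 ≤ (1+a)*(f yk - 1/(2*L)*‖g‖^2 - f xk1)
          + a*(f xstar - f yk + ⟪g,p⟫ - μ/2*‖p‖^2)
          + (f xk - f yk - a*(⟪g,p⟫ - ⟪g,q⟫)
             - μ/2*(a^2*(‖p‖^2 - 2*⟪p,q⟫ + ‖q‖^2))) := by
    have t1 : 0 ≤ (1+a)*(f yk - 1/(2*L)*‖g‖^2 - f xk1) := by
      apply mul_nonneg (by linarith); linarith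
    have t2 : 0 ≤ a*(f xstar - f yk + ⟪g,p⟫ - μ/2*‖p‖^2) :=
      mul_nonneg ha.le (by linarith)
    linarith
  have htot : 0 ≤ 2*L*(gk+a*μ) * ((f xk - f xstar + gk/2*‖q‖^2)
        - (1+a)*(f xk1 - f xstar) - (gk+a*μ)/2*‖e‖^2) := by
    rw [hID]
    have h2 := mul_nonneg hc.le hsum
    have h3 := mul_nonneg (mul_nonneg ha.le hμ) hB
    linarith
  have hT : 0 ≤ (f xk - f xstar + gk/2*‖q‖^2)
        - (1+a)*(f xk1 - f xstar) - (gk+a*μ)/2*‖e‖^2 :=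
    (mul_nonneg_iff_of_pos_left hc).mp htot
  have hEe : (1+a)*(g1/2*‖e‖^2) = (gk+a*μ)/2*‖e‖^2 := by
    rw [← hγ']; ring
  have expand : (1+a)*(f xk1 - f xstar + g1/2*‖e‖^2)
      = (1+a)*(f xk1 - f xstar) + (1+a)*(g1/2*‖e‖^2) := by ring
  rw [expand, hEe]
  linarith


set_option maxHeartbeats 1000000 in
theorem stmt9 {V : Type*} [NormedAddCommGroup V] [InnerProductSpace ℝ V] [CompleteSpace V]
    (μ L : ℝ) (hμ : 0 ≤ μ) (hμL : μ ≤ L) (hL : 0 < L) (f : V → ℝ) (f' : V → V)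
    (hdiff : ∀ z, HasGradientAt f (f' z) z)
    (hconv : ∀ z w : V, f z - f w - ⟪f' w, z - w⟫ ≥ μ / 2 * ‖z - w‖ ^ 2)
    (hlip : ∀ z w : V, ‖f' z - f' w‖ ≤ L * ‖z - w‖)
    (xstar : V) (hmin : ∀ z, f xstar ≤ f z)
    (γ α : ℕ → ℝ) (hγ0 : 0 < γ 0) (hα : ∀ k, 0 < α k)
    (hstep : ∀ k, L * (α k) ^ 2 = γ k * (1 + α k))
    (x y v : ℕ → V)
    (hγrec : ∀ k, γ (k + 1) = γ k + α k * (μ - γ (k + 1)))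
    (hyrec : ∀ k, y k - x k = α k • (v k - y k))
    (hvrec : ∀ k, γ k • (v (k + 1) - v k) = α k • (μ • (y k - v (k + 1)) - f' (y k)))
    (hxrec : ∀ k, x (k + 1) = y k - (1 / L) • f' (y k)) :
    (∀ k : ℕ,
      f (x k) - f xstar + γ k / 2 * ‖v k - xstar‖ ^ 2 ≤
        (f (x 0) - f xstar + γ 0 / 2 * ‖v 0 - xstar‖ ^ 2) *
          min (4 * L / (Real.sqrt (γ 0) * k + 2 * Real.sqrt L) ^ 2)
            (((1 + Real.sqrt (min (γ 0) μ / L)) ^ k)⁻¹)) ∧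
    (γ 0 ≥ L → ∀ k : ℕ, 1 ≤ k →
      f (x k) - f xstar + γ k / 2 * ‖v k - xstar‖ ^ 2 ≤
        (f (x 0) - f xstar + L / 2 * ‖v 0 - xstar‖ ^ 2) *
          min (4 / (k : ℝ) ^ 2) (((1 + Real.sqrt (μ / L)) ^ (k - 1))⁻¹)) := by
  have hdesc : ∀ z w : V, f z ≤ f w + ⟪f' w, z - w⟫ + L / 2 * ‖z - w‖ ^ 2 :=
    descent_lemma L hL f f' hdiff hlip
  have h1α : ∀ k, (0:ℝ) < 1 + α k := fun k => by linarith [hα k]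
  have hγpos : ∀ k, 0 < γ k := by
    intro k
    induction k with
    | zero => exact hγ0
    | succ n ih =>
      have h := hγrec n
      nlinarith [hα n, mul_nonneg (hα n).le hμ]
  have onestep : ∀ k, (1 + α k) *
      (f (x (k+1)) - f xstar + γ (k+1) / 2 * ‖v (k+1) - xstar‖ ^ 2) ≤
      f (x k) - f xstar + γ k / 2 * ‖v k - xstar‖ ^ 2 := fun k =>
    onestep_lemma μ L hμ hL f f' hconv hdesc xstar (α k) (γ k) (γ (k+1)) (hα k)
      (hγpos k) (hstep k) (x k) (x (k+1)) (y k) (v k) (v (k+1)) (hγrec k)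
      (hyrec k) (hvrec k) (hxrec k)
  set lam : ℕ → ℝ := fun k => ∏ i ∈ Finset.range k, (1 + α i)⁻¹ with hlamdef
  have hlampos : ∀ k, 0 < lam k :=
    fun k => Finset.prod_pos (fun i _ => inv_pos.2 (h1α i))
  have hlamsucc : ∀ k, lam (k+1) = lam k * (1 + α k)⁻¹ :=
    fun k => Finset.prod_range_succ _ k
  have hlam0 : lam 0 = 1 := Finset.prod_range_zero _
  have hLy : ∀ k, f (x k) - f xstar + γ k / 2 * ‖v k - xstar‖ ^ 2 ≤
      lam k * (f (x 0) - f xstar + γ 0 / 2 * ‖v 0 - xstar‖ ^ 2) := by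
    intro k
    induction k with
    | zero => rw [hlam0, one_mul]
    | succ n ih =>
      have h1 := onestep n
      have h2 : (0:ℝ) < (1 + α n)⁻¹ := inv_pos.2 (h1α n)
      have h3 : f (x (n+1)) - f xstar + γ (n+1) / 2 * ‖v (n+1) - xstar‖ ^ 2 ≤
          (1 + α n)⁻¹ * (f (x n) - f xstar + γ n / 2 * ‖v n - xstar‖ ^ 2) := by
        rw [le_inv_mul_iff₀ (h1α n)]
        linarith [h1]
      calc f (x (n+1)) - f xstar + γ (n+1) / 2 * ‖v (n+1) - xstar‖ ^ 2
          ≤ (1 + α n)⁻¹ * (f (x n) - f xstar + γ n / 2 * ‖v n - xstar‖ ^ 2) := h3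
        _ ≤ (1 + α n)⁻¹ * (lam n * (f (x 0) - f xstar + γ 0 / 2 * ‖v 0 - xstar‖ ^ 2)) :=
            mul_le_mul_of_nonneg_left ih h2.le
        _ = lam (n+1) * (f (x 0) - f xstar + γ 0 / 2 * ‖v 0 - xstar‖ ^ 2) := by
            rw [hlamsucc n]; ring
  have hγlam : ∀ k, γ 0 * lam k ≤ γ k := by
    intro k
    induction k with
    | zero => rw [hlam0]; simp
    | succ n ih =>
      have h := hγrec n
      have h2 : γ n ≤ γ (n+1) * (1 + α n) := by nlinarith [mul_nonneg (hα n).le hμ]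
      have h3 : γ n * (1 + α n)⁻¹ ≤ γ (n+1) := by
        rw [mul_inv_le_iff₀ (h1α n)]; linarith
      calc γ 0 * lam (n+1) = (γ 0 * lam n) * (1 + α n)⁻¹ := by rw [hlamsucc n]; ring
        _ ≤ γ n * (1 + α n)⁻¹ :=
            mul_le_mul_of_nonneg_right ih (inv_pos.2 (h1α n)).le
        _ ≤ γ (n+1) := h3
  have hγmin : ∀ k, min (γ 0) μ ≤ γ k := by
    intro k
    induction k with
    | zero => exact min_le_left _ _
    | succ n ih =>
      have h := hγrec n
      have hm2 : min (γ 0) μ ≤ μ := min_le_right _ _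
      nlinarith [hα n, h1α n]
  set A : ℕ → ℝ := fun k => ∏ i ∈ Finset.range k, Real.sqrt (1 + α i) with hAdef
  have hApos : ∀ k, 0 < A k :=
    fun k => Finset.prod_pos (fun i _ => Real.sqrt_pos.2 (h1α i))
  have hAsucc : ∀ k, A (k+1) = A k * Real.sqrt (1 + α k) :=
    fun k => Finset.prod_range_succ _ k
  have hA0 : A 0 = 1 := Finset.prod_range_zero _
  have hAsq : ∀ k, A k ^ 2 * lam k = 1 := by
    intro k
    induction k with
    | zero => rw [hA0, hlam0]; norm_num
    | succ n ih =>
      rw [hAsucc n, hlamsucc n, mul_pow, Real.sq_sqrt (h1α n).le]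
      calc A n ^ 2 * (1 + α n) * (lam n * (1 + α n)⁻¹)
          = (A n ^ 2 * lam n) * ((1 + α n) * (1 + α n)⁻¹) := by ring
        _ = 1 := by rw [ih, mul_inv_cancel₀ (ne_of_gt (h1α n))]; norm_num
  have hsqgamma : ∀ k, Real.sqrt (1 + α k) * Real.sqrt (γ k / L) = α k := by
    intro k
    rw [← Real.sqrt_mul (h1α k).le]
    have he : (1 + α k) * (γ k / L) = (α k)^2 := by
      field_simp
      linear_combination -hstep k
    rw [he, Real.sqrt_sq (hα k).le]
  have hsqle : ∀ k, Real.sqrt (γ k / L) ≤ α k := by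
    intro k
    have h1 : (1:ℝ) ≤ Real.sqrt (1 + α k) := by
      have := Real.sqrt_le_sqrt (show (1:ℝ) ≤ 1 + α k by linarith [hα k])
      rwa [Real.sqrt_one] at this
    calc Real.sqrt (γ k / L) = 1 * Real.sqrt (γ k / L) := (one_mul _).symm
      _ ≤ Real.sqrt (1 + α k) * Real.sqrt (γ k / L) :=
          mul_le_mul_of_nonneg_right h1 (Real.sqrt_nonneg _)
      _ = α k := hsqgamma k
  -- growth of A
  have hAgrow : ∀ k : ℕ, 1 + (k:ℝ) * (Real.sqrt (γ 0 / L) / 2) ≤ A k := by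
    intro k
    induction k with
    | zero => rw [hA0]; norm_num
    | succ n ih =>
      have hs1 : (1:ℝ) ≤ Real.sqrt (1 + α n) := by
        have := Real.sqrt_le_sqrt (show (1:ℝ) ≤ 1 + α n by linarith [hα n])
        rwa [Real.sqrt_one] at this
      have ht0 : (0:ℝ) ≤ Real.sqrt (γ 0 / L) := Real.sqrt_nonneg _
      have hs2 : Real.sqrt (1 + α n) ^ 2 = 1 + α n := Real.sq_sqrt (h1α n).le
      -- t ≤ A n * sqrt(γ n / L)
      have h1 : Real.sqrt (γ 0 / L) ≤ A n * Real.sqrt (γ n / L) := by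
        have e1 : A n * Real.sqrt (γ n / L) = Real.sqrt (A n ^ 2 * (γ n / L)) := by
          rw [Real.sqrt_mul (sq_nonneg _), Real.sqrt_sq (hApos n).le]
        rw [e1]
        apply Real.sqrt_le_sqrt
        have e2 : γ 0 / L = (A n ^ 2 * lam n) * (γ 0 / L) := by rw [hAsq n]; ring
        rw [e2]
        have e3 : A n ^ 2 * lam n * (γ 0 / L) = (A n ^2 / L) * (γ 0 * lam n) := by ring
        rw [e3]
        have e4 : A n ^ 2 * (γ n / L) = (A n ^2 / L) * γ n := by ring
        rw [e4]
        exact mul_le_mul_of_nonneg_left (hγlam n) (by positivity)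
      have h2 := hsqgamma n
      have key : Real.sqrt (γ 0 / L) / 2 ≤ A n * (Real.sqrt (1 + α n) - 1) := by
        nlinarith [mul_le_mul_of_nonneg_left h1 (by linarith : (0:ℝ) ≤ Real.sqrt (1 + α n)),
          mul_nonneg ht0 (by linarith : (0:ℝ) ≤ Real.sqrt (1 + α n) - 1),
          hApos n, Real.sqrt_nonneg (γ n / L)]
      rw [hAsucc n]
      push_cast
      nlinarith [ih, key]
  have hlamA : ∀ k, lam k = (A k ^ 2)⁻¹ := fun k =>
    eq_inv_of_mul_eq_one_left (by linear_combination hAsq k)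
  -- bound 1 : lam k ≤ 4L / (sqrt γ0 * k + 2 sqrt L)^2
  have hsl : Real.sqrt L * Real.sqrt (γ 0 / L) = Real.sqrt (γ 0) := by
    rw [← Real.sqrt_mul hL.le]
    congr 1
    field_simp
  have hlam4 : ∀ k : ℕ, lam k ≤ 4 * L / (Real.sqrt (γ 0) * k + 2 * Real.sqrt L) ^ 2 := by
    intro k
    have hden : Real.sqrt (γ 0) * k + 2 * Real.sqrt L =
        2 * Real.sqrt L * (1 + (k:ℝ) * (Real.sqrt (γ 0 / L) / 2)) := by
      rw [← hsl]; ring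
    have hLpos : (0:ℝ) < Real.sqrt L := Real.sqrt_pos.2 hL
    have hfac : (0:ℝ) < 1 + (k:ℝ) * (Real.sqrt (γ 0 / L) / 2) := by
      positivity
    have hdenpos : (0:ℝ) < (Real.sqrt (γ 0) * k + 2 * Real.sqrt L) ^ 2 := by
      rw [hden]; positivity
    have hsq : (Real.sqrt (γ 0) * k + 2 * Real.sqrt L) ^ 2 ≤ 4 * L * A k ^ 2 := by
      rw [hden]
      have h1 := hAgrow k
      have e : (2 * Real.sqrt L * (1 + (k:ℝ) * (Real.sqrt (γ 0 / L) / 2))) ^ 2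
          = 4 * (Real.sqrt L)^2 * (1 + (k:ℝ) * (Real.sqrt (γ 0 / L) / 2))^2 := by ring
      rw [e, Real.sq_sqrt hL.le]
      have h2 : (1 + (k:ℝ) * (Real.sqrt (γ 0 / L) / 2))^2 ≤ A k ^ 2 := by
        nlinarith [hfac, h1]
      nlinarith [hL]
    have h4LA : (0:ℝ) < 4 * L * A k ^ 2 :=
      mul_pos (by linarith) (pow_pos (hApos k) 2)
    have e5 : lam k = 4 * L / (4 * L * A k ^ 2) := by
      rw [hlamA k]
      rw [eq_comm, div_eq_iff h4LA.ne']
      rw [inv_mul_eq_div, eq_div_iff (pow_pos (hApos k) 2).ne']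
    rw [e5]
    exact div_le_div_of_nonneg_left (by positivity) hdenpos hsq
  -- bound 2 : geometric
  have hgeo : ∀ k : ℕ, lam k ≤ ((1 + Real.sqrt (min (γ 0) μ / L)) ^ k)⁻¹ := by
    intro k
    have hρ : (1:ℝ) ≤ 1 + Real.sqrt (min (γ 0) μ / L) := by
      linarith [Real.sqrt_nonneg (min (γ 0) μ / L)]
    induction k with
    | zero => rw [hlam0]; norm_num
    | succ n ih =>
      have hstep1 : 1 + Real.sqrt (min (γ 0) μ / L) ≤ 1 + α n := by
        have h1 : Real.sqrt (min (γ 0) μ / L) ≤ Real.sqrt (γ n / L) :=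
          Real.sqrt_le_sqrt (div_le_div_of_nonneg_right (hγmin n) hL.le)
        linarith [h1.trans (hsqle n)]
      rw [hlamsucc n, pow_succ, mul_inv]
      apply mul_le_mul ih _ (inv_pos.2 (h1α n)).le (by positivity)
      exact inv_anti₀ (by linarith) hstep1
  -- nonnegativity of initial Lyapunov
  have hQ0 : (0:ℝ) ≤ ‖v 0 - xstar‖ ^ 2 := sq_nonneg _
  have hf0 : 0 ≤ f (x 0) - f xstar := by linarith [hmin (x 0)]
  have hLy0 : 0 ≤ f (x 0) - f xstar + γ 0 / 2 * ‖v 0 - xstar‖ ^ 2 := by positivity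
  constructor
  · intro k
    have h1 := hLy k
    have h2 : lam k ≤ min (4 * L / (Real.sqrt (γ 0) * k + 2 * Real.sqrt L) ^ 2)
        (((1 + Real.sqrt (min (γ 0) μ / L)) ^ k)⁻¹) := le_min (hlam4 k) (hgeo k)
    calc f (x k) - f xstar + γ k / 2 * ‖v k - xstar‖ ^ 2
        ≤ lam k * (f (x 0) - f xstar + γ 0 / 2 * ‖v 0 - xstar‖ ^ 2) := h1
      _ ≤ min (4 * L / (Real.sqrt (γ 0) * k + 2 * Real.sqrt L) ^ 2)
            (((1 + Real.sqrt (min (γ 0) μ / L)) ^ k)⁻¹) *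
            (f (x 0) - f xstar + γ 0 / 2 * ‖v 0 - xstar‖ ^ 2) :=
          mul_le_mul_of_nonneg_right h2 hLy0
      _ = (f (x 0) - f xstar + γ 0 / 2 * ‖v 0 - xstar‖ ^ 2) * _ := mul_comm _ _
  · intro hγL k hk1
    obtain ⟨j, rfl⟩ : ∃ j, k = j + 1 := ⟨k - 1, (Nat.succ_pred_eq_of_pos hk1).symm⟩
    have hkm : (j + 1) - 1 = j := rfl
    set ρ : ℝ := 1 + Real.sqrt (μ / L) with hρdef
    have hρ1 : (1:ℝ) ≤ ρ := by
      rw [hρdef]; linarith [Real.sqrt_nonneg (μ / L)]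
    have hρpos : (0:ℝ) < ρ := by linarith
    have hμγ0 : μ ≤ γ 0 := le_trans hμL hγL
    have hminμ : min (γ 0) μ = μ := min_eq_right hμγ0
    -- geometric bound starting from step 1
    have hgeo2 : ∀ i : ℕ, lam (i + 1) ≤ (1 + α 0)⁻¹ * (ρ ^ i)⁻¹ := by
      intro i
      induction i with
      | zero =>
        have : lam 1 = (1 + α 0)⁻¹ := by simp [hlamdef]
        rw [this]; norm_num
      | succ n ih =>
        have hstep1 : ρ ≤ 1 + α n.succ := by
          have h1 : Real.sqrt (μ / L) ≤ Real.sqrt (γ (n+1) / L) := by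
            apply Real.sqrt_le_sqrt
            apply div_le_div_of_nonneg_right _ hL.le
            calc μ = min (γ 0) μ := hminμ.symm
              _ ≤ γ (n+1) := hγmin (n+1)
          rw [hρdef]
          linarith [h1.trans (hsqle (n+1))]
        rw [hlamsucc (n+1), pow_succ, mul_inv, ← mul_assoc]
        apply mul_le_mul ih _ (inv_pos.2 (h1α (n+1))).le
          (mul_nonneg (inv_nonneg.2 (h1α 0).le) (inv_nonneg.2 (pow_nonneg hρpos.le n)))
        exact inv_anti₀ hρpos hstep1
    have hα0inv : (1 + α 0)⁻¹ ≤ 1 := by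
      rw [inv_le_one_iff₀]; right; linarith [hα 0]
    have hγ0α : γ 0 * (1 + α 0)⁻¹ ≤ L := by
      have hu : (1 + α 0) * (1 + α 0)⁻¹ = 1 := mul_inv_cancel₀ (ne_of_gt (h1α 0))
      have hau : α 0 * (1 + α 0)⁻¹ ≤ 1 := by
        calc α 0 * (1 + α 0)⁻¹ ≤ (1 + α 0) * (1 + α 0)⁻¹ :=
              mul_le_mul_of_nonneg_right (by linarith) (inv_pos.2 (h1α 0)).le
          _ = 1 := hu
      have hau0 : 0 ≤ α 0 * (1 + α 0)⁻¹ :=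
        mul_nonneg (hα 0).le (inv_pos.2 (h1α 0)).le
      have he : γ 0 * (1 + α 0)⁻¹ = L * (α 0 * (1 + α 0)⁻¹)^2 := by
        have h := hstep 0
        have h2 : γ 0 * ((1 + α 0) * (1 + α 0)⁻¹) * (1 + α 0)⁻¹
            = L * (α 0 * (1 + α 0)⁻¹)^2 := by
          linear_combination (-((1 + α 0)⁻¹)^2) * h
        rw [hu] at h2
        linarith [h2]
      rw [he]
      nlinarith [mul_le_mul hau hau hau0 (by norm_num : (0:ℝ) ≤ 1), hL]
    -- t ≥ 1
    have ht1 : (1:ℝ) ≤ Real.sqrt (γ 0 / L) := by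
      have := Real.sqrt_le_sqrt (show (1:ℝ) ≤ γ 0 / L by rw [le_div_iff₀ hL]; linarith)
      rwa [Real.sqrt_one] at this
    have hk0 : (0:ℝ) < ((j:ℝ) + 1) := by positivity
    have hAk : ((j:ℝ)+1) / 2 * Real.sqrt (γ 0 / L) ≤ A (j+1) := by
      have := hAgrow (j+1)
      push_cast at this ⊢
      nlinarith [Real.sqrt_nonneg (γ 0 / L)]
    -- b1 : lam ≤ 4 / k^2
    have hApos' := hApos (j+1)
    have hb1 : lam (j+1) ≤ 4 / ((j:ℝ)+1)^2 := by
      have h1 : ((j:ℝ)+1)/2 ≤ A (j+1) := by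
        calc ((j:ℝ)+1)/2 = ((j:ℝ)+1)/2 * 1 := by ring
          _ ≤ ((j:ℝ)+1)/2 * Real.sqrt (γ 0 / L) :=
              mul_le_mul_of_nonneg_left ht1 (by positivity)
          _ ≤ A (j+1) := hAk
      rw [hlamA]
      rw [inv_le_iff_one_le_mul₀ (by positivity)]
      rw [div_mul_eq_mul_div, le_div_iff₀ (by positivity)]
      nlinarith [h1, hk0]
    -- b2 : γ0 * lam ≤ 4L / k^2
    have hb2 : γ 0 * lam (j+1) ≤ L * (4 / ((j:ℝ)+1)^2) := by
      have ht2 : Real.sqrt (γ 0 / L) ^ 2 = γ 0 / L :=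
        Real.sq_sqrt (by positivity)
      have h1 : ((j:ℝ)+1)^2/4 * (γ 0 / L) ≤ A (j+1) ^ 2 := by
        have h2 : (((j:ℝ)+1) / 2 * Real.sqrt (γ 0 / L))^2 ≤ A (j+1) ^ 2 := by
          apply sq_le_sq' _ hAk
          nlinarith [hAk, hApos', Real.sqrt_nonneg (γ 0 / L)]
        calc ((j:ℝ)+1)^2/4 * (γ 0 / L)
            = (((j:ℝ)+1) / 2 * Real.sqrt (γ 0 / L))^2 := by rw [mul_pow, ht2]; ring
          _ ≤ A (j+1) ^ 2 := h2
      rw [hlamA]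
      rw [mul_inv_le_iff₀ (by positivity)]
      have hkne : ((j:ℝ)+1) ≠ 0 := by positivity
      calc γ 0 = L * (4 / ((j:ℝ)+1)^2) * (((j:ℝ)+1)^2/4 * (γ 0 / L)) := by
            field_simp
          _ ≤ L * (4 / ((j:ℝ)+1)^2) * A (j+1)^2 :=
            mul_le_mul_of_nonneg_left h1 (by positivity)
    -- b3, b4
    have hb3 : lam (j+1) ≤ (ρ ^ j)⁻¹ := by
      calc lam (j+1) ≤ (1 + α 0)⁻¹ * (ρ ^ j)⁻¹ := hgeo2 j
        _ ≤ 1 * (ρ ^ j)⁻¹ := mul_le_mul_of_nonneg_right hα0inv (by positivity)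
        _ = (ρ ^ j)⁻¹ := one_mul _
    have hb4 : γ 0 * lam (j+1) ≤ L * (ρ ^ j)⁻¹ := by
      calc γ 0 * lam (j+1) ≤ γ 0 * ((1 + α 0)⁻¹ * (ρ ^ j)⁻¹) :=
            mul_le_mul_of_nonneg_left (hgeo2 j) hγ0.le
        _ = (γ 0 * (1 + α 0)⁻¹) * (ρ ^ j)⁻¹ := by ring
        _ ≤ L * (ρ ^ j)⁻¹ := mul_le_mul_of_nonneg_right hγ0α (by positivity)
    -- assemble
    have hM1 : lam (j+1) ≤ min (4 / ((j:ℝ)+1)^2) ((ρ ^ j)⁻¹) := le_min hb1 hb3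
    have hM2 : γ 0 * lam (j+1) ≤ L * min (4 / ((j:ℝ)+1)^2) ((ρ ^ j)⁻¹) := by
      rw [mul_min_of_nonneg _ _ hL.le]
      exact le_min hb2 hb4
    have hfin := hLy (j+1)
    have e1 : lam (j+1) * (f (x 0) - f xstar + γ 0 / 2 * ‖v 0 - xstar‖ ^ 2)
        = lam (j+1) * (f (x 0) - f xstar) + (γ 0 * lam (j+1)) / 2 * ‖v 0 - xstar‖ ^ 2 := by
      ring
    have hMnn : (0:ℝ) ≤ min (4 / ((j:ℝ)+1)^2) ((ρ ^ j)⁻¹) :=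
      le_min (by positivity) (by positivity)
    have h2 : lam (j+1) * (f (x 0) - f xstar) ≤
        min (4 / ((j:ℝ)+1)^2) ((ρ ^ j)⁻¹) * (f (x 0) - f xstar) :=
      mul_le_mul_of_nonneg_right hM1 hf0
    have h3 : (γ 0 * lam (j+1)) / 2 * ‖v 0 - xstar‖ ^ 2 ≤
        (L * min (4 / ((j:ℝ)+1)^2) ((ρ ^ j)⁻¹)) / 2 * ‖v 0 - xstar‖ ^ 2 := by
      apply mul_le_mul_of_nonneg_right _ hQ0
      linarith [hM2]
    have hcast : ((j+1 : ℕ) : ℝ) = (j:ℝ) + 1 := by push_cast; ring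
    rw [hkm, hcast]
    calc f (x (j+1)) - f xstar + γ (j+1) / 2 * ‖v (j+1) - xstar‖ ^ 2
        ≤ lam (j+1) * (f (x 0) - f xstar + γ 0 / 2 * ‖v 0 - xstar‖ ^ 2) := hfin
      _ = lam (j+1) * (f (x 0) - f xstar) + (γ 0 * lam (j+1)) / 2 * ‖v 0 - xstar‖ ^ 2 := e1
      _ ≤ min (4 / ((j:ℝ)+1)^2) ((ρ ^ j)⁻¹) * (f (x 0) - f xstar)
          + (L * min (4 / ((j:ℝ)+1)^2) ((ρ ^ j)⁻¹)) / 2 * ‖v 0 - xstar‖ ^ 2 := by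
          linarith [h2, h3]
      _ = (f (x 0) - f xstar + L / 2 * ‖v 0 - xstar‖ ^ 2) *
            min (4 / ((j:ℝ)+1)^2) ((ρ ^ j)⁻¹) := by ring
end

section
/- Let V be a real Hilbert space, 0 ≤ μ ≤ L with L > 0, and let f ∈ S^{1,1}_{μ,L} with global minimizer x*. Let γ_0 > 0, and for each k ≥ 0 let α_k ∈ (0,1) satisfy L·α_k² = (1 − α_k)γ_k + μ·α_k, with γ_{k+1} = (1 − α_k)γ_k + μ·α_k, (y_k − x_k)/α_k = (γ_k/γ_{k+1})(v_k − y_k), (v_{k+1} − v_k)/α_k = (μ/γ_{k+1})(y_k − v_k) − (1/γ_{k+1})∇f(y_k), and f(x_{k+1}) ≤ f(y_k) − (1/(2L))‖∇f(y_k)‖². Then for all k ≥ 0: 𝓛_k ≤ 𝓛_0 · min{ 4L/(√γ_0·k + 2√L)², (1 − √(min{γ_1, μ}/L))^{k} }. Moreover, if γ_0 ≥ L, then for all k ≥ 1: 𝓛_k ≤ (f(x_0) − f(x*) + (L/2)‖v_0 − x*‖²) · min{ 4/k², (1 − √(μ/L))^{k−1} }. -/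
open RealInnerProductSpace

section helpers

lemma aux_contr (μ L γ α fy fstar fx fx' A B N P Q R : ℝ)
    (hμ0 : 0 ≤ μ) (hL : 0 < L) (hγ : 0 < γ) (hα0 : 0 < α) (hα1 : α < 1)
    (hstep : L * α^2 = (1-α)*γ + μ*α)
    (h1 : fx' ≤ fy - 1/(2*L) * N)
    (h2 : fstar - fy + (A + B) ≥ μ/2 * (P + 2*R + Q))
    (h3 : L*α*(fx - fy) ≥ γ*A)
    (hP : 0 ≤ P) :
    fx' - fstar + ((1-α)*γ + μ*α)/2 *
      (Q + (2*α/((1-α)*γ + μ*α))*(μ*R - B)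
        + (α/((1-α)*γ + μ*α))^2*(μ^2*P - 2*μ*A + N))
      ≤ (1-α)*(fx - fstar) + (1-α)*γ/2*Q := by
  have hγ' : 0 < (1-α)*γ + μ*α := by nlinarith
  have hμLα : μ ≤ L * α := by nlinarith
  have hα' : α ≠ 0 := ne_of_gt hα0
  have hL' : (L:ℝ) ≠ 0 := ne_of_gt hL
  rw [← hstep]
  have hexp : (L*α^2)/2 *
      (Q + (2*α/(L*α^2))*(μ*R - B) + (α/(L*α^2))^2*(μ^2*P - 2*μ*A + N))
      = (L*α^2)/2*Q + α*(μ*R - B) + (μ^2*P - 2*μ*A + N)/(2*L) := by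
    field_simp
  rw [hexp]
  have h1' : 2*L*α*fx' ≤ 2*L*α*fy - α*N := by
    have := mul_le_mul_of_nonneg_left h1 (by positivity : (0:ℝ) ≤ 2*L*α)
    calc 2*L*α*fx' ≤ 2*L*α*(fy - 1/(2*L)*N) := this
      _ = 2*L*α*fy - α*N := by field_simp
  have h2' : 2*L*α^2*(fstar - fy + (A + B)) ≥ 2*L*α^2*(μ/2 * (P + 2*R + Q)) :=
    mul_le_mul_of_nonneg_left h2 (by positivity)
  have h3' : 2*(1-α)*(L*α*(fx - fy)) ≥ 2*(1-α)*(γ*A) :=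
    mul_le_mul_of_nonneg_left h3 (by linarith)
  have hS : 0 ≤ μ*α*(L*α-μ)*P := by
    have : 0 ≤ L*α - μ := by linarith
    positivity
  have hQeq : L*α*(L*α^2)*Q = L*α*((1-α)*γ)*Q + L*α*(μ*α)*Q := by
    rw [hstep]; ring
  have h2L : (0:ℝ) < 2*L*α := by positivity
  rw [← mul_le_mul_iff_right₀ h2L]
  have hclear : 2*L*α*(fx' - fstar + (L*α^2/2*Q + α*(μ*R-B) + (μ^2*P - 2*μ*A + N)/(2*L)))
      = 2*L*α*(fx' - fstar) + L*α*(L*α^2)*Q + 2*L*α^2*(μ*R-B) + α*(μ^2*P - 2*μ*A + N) := by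
    field_simp; ring
  rw [hclear]
  have hAeq : 2*(L*α^2)*A = 2*((1-α)*γ + μ*α)*A := by rw [hstep]
  nlinarith [h1', h2', h3', hS, hQeq, hAeq]

lemma aux_rate (b b' s r k' : ℝ) (hb' : 0 ≤ b') (hs : 0 < s) (hr : 0 < r) (hk : 0 ≤ k')
    (h1 : b * (2*s + k'*r) ≤ 2*s)
    (h2 : b'^2*s ≤ (s - b'*r)*b^2)
    (hbb' : b' ≤ b) :
    b' * (2*s + (k'+1)*r) ≤ 2*s := by
  have hb : 0 ≤ b := le_trans hb' hbb'
  rcases le_or_gt (s - b'*r) 0 with hneg | hpos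
  · have hcc : (s - b'*r)*b^2 ≤ 0 := mul_nonpos_of_nonpos_of_nonneg hneg (sq_nonneg b)
    have h0 : b'^2 ≤ 0 := by nlinarith
    have hb'0 : b' = 0 := le_antisymm (by nlinarith) hb'
    rw [hb'0]; nlinarith
  · have hd : 0 < 2*s + k'*r := by positivity
    have key : b'^2*(2*s+k'*r)^2 ≤ 4*s*(s - b'*r) := by
      have e1 : b'^2*s*(2*s+k'*r)^2 ≤ (s-b'*r)*(b*(2*s+k'*r))^2 := by
        nlinarith [sq_nonneg (2*s+k'*r)]
      have e2 : (s-b'*r)*(b*(2*s+k'*r))^2 ≤ (s-b'*r)*(2*s)^2 := by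
        apply mul_le_mul_of_nonneg_left _ hpos.le
        nlinarith [mul_nonneg hb hd.le]
      nlinarith
    have hbrs : b'*r ≤ s := by nlinarith [sq_nonneg (b'*(2*s+k'*r))]
    have hw : 0 ≤ b' * (2*s + (k'+1)*r) := by positivity
    nlinarith [key, sq_nonneg (b'*r), mul_nonneg hw (by linarith : (0:ℝ) ≤ 2*s - 2*r*b')]

lemma aux_part2a (lam Ly f0 d g0 L k2 : ℝ) (hlam : 0 ≤ lam) (hf0 : 0 ≤ f0) (hd : 0 ≤ d)
    (hg0 : 0 < g0) (hL : 0 < L) (hLg : L ≤ g0) (hk2 : 0 < k2)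
    (hLy : Ly ≤ lam * (f0 + g0/2*d)) (hE : lam * (g0 * k2) ≤ 4*L) :
    Ly * k2 ≤ (f0 + L/2*d) * 4 := by
  have hEf := mul_le_mul_of_nonneg_right hE hf0
  have hED := mul_le_mul_of_nonneg_right hE (by positivity : (0:ℝ) ≤ d/2)
  have hLyk := mul_le_mul_of_nonneg_right hLy hk2.le
  have hLyg := mul_le_mul_of_nonneg_right hLyk hg0.le
  nlinarith [mul_nonneg (mul_nonneg hlam hk2.le) (mul_nonneg hg0.le hd)]

end helpers

set_option maxHeartbeats 2000000 in
theorem stmt11 {V : Type*} [NormedAddCommGroup V] [InnerProductSpace ℝ V] [CompleteSpace V]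
    (μ L : ℝ) (hμ : 0 ≤ μ) (hμL : μ ≤ L) (hL : 0 < L) (f : V → ℝ) (f' : V → V)
    (hdiff : ∀ z, HasGradientAt f (f' z) z)
    (hconv : ∀ z w : V, f z - f w - ⟪f' w, z - w⟫ ≥ μ / 2 * ‖z - w‖ ^ 2)
    (hlip : ∀ z w : V, ‖f' z - f' w‖ ≤ L * ‖z - w‖)
    (xstar : V) (hmin : ∀ z, f xstar ≤ f z)
    (γ α : ℕ → ℝ) (hγ0 : 0 < γ 0) (hα : ∀ k, 0 < α k ∧ α k < 1)
    (hstep : ∀ k, L * (α k) ^ 2 = (1 - α k) * γ k + μ * α k)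
    (x y v : ℕ → V)
    (hγrec : ∀ k, γ (k + 1) = (1 - α k) * γ k + μ * α k)
    (hyrec : ∀ k, γ (k + 1) • (y k - x k) = (α k * γ k) • (v k - y k))
    (hvrec : ∀ k, γ (k + 1) • (v (k + 1) - v k) = α k • (μ • (y k - v k) - f' (y k)))
    (hxrec : ∀ k, f (x (k + 1)) ≤ f (y k) - 1 / (2 * L) * ‖f' (y k)‖ ^ 2) :
    (∀ k : ℕ,
      f (x k) - f xstar + γ k / 2 * ‖v k - xstar‖ ^ 2 ≤
        (f (x 0) - f xstar + γ 0 / 2 * ‖v 0 - xstar‖ ^ 2) *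
          min (4 * L / (Real.sqrt (γ 0) * k + 2 * Real.sqrt L) ^ 2)
            ((1 - Real.sqrt (min (γ 1) μ / L)) ^ k)) ∧
    (γ 0 ≥ L → ∀ k : ℕ, 1 ≤ k →
      f (x k) - f xstar + γ k / 2 * ‖v k - xstar‖ ^ 2 ≤
        (f (x 0) - f xstar + L / 2 * ‖v 0 - xstar‖ ^ 2) *
          min (4 / (k : ℝ) ^ 2) ((1 - Real.sqrt (μ / L)) ^ (k - 1))) := by
  -- basic positivity
  have hγpos : ∀ k, 0 < γ k := by
    intro k
    induction k with
    | zero => exact hγ0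
    | succ n ih =>
      rw [hγrec n]
      nlinarith [(hα n).1, (hα n).2]
  set Lya : ℕ → ℝ := fun k => f (x k) - f xstar + γ k / 2 * ‖v k - xstar‖ ^ 2 with hLya
  have hLyapos : ∀ k, 0 ≤ Lya k := by
    intro k
    have h1 := hmin (x k)
    have h2 : 0 ≤ γ k / 2 * ‖v k - xstar‖ ^ 2 := by
      have := hγpos k; positivity
    simp only [hLya]; linarith
  -- the contraction step
  have hcontr : ∀ k, Lya (k + 1) ≤ (1 - α k) * Lya k := by
    intro k
    have hγ1pos : 0 < γ (k+1) := hγpos (k+1)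
    have hγ1ne : γ (k+1) ≠ 0 := ne_of_gt hγ1pos
    have hα0 := (hα k).1
    have hα1 := (hα k).2
    set g : V := f' (y k) with hg
    set A : ℝ := ⟪g, y k - v k⟫ with hA
    set B : ℝ := ⟪g, v k - xstar⟫ with hB
    set N : ℝ := ‖g‖^2 with hN
    set P : ℝ := ‖y k - v k‖^2 with hPdef
    set Q : ℝ := ‖v k - xstar‖^2 with hQdef
    set R : ℝ := ⟪y k - v k, v k - xstar⟫ with hR
    -- expansion of the new distance
    have hvstep : v (k+1) - v k = (α k / γ (k+1)) • (μ • (y k - v k) - g) := by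
      calc v (k+1) - v k = (γ (k+1))⁻¹ • (γ (k+1) • (v (k+1) - v k)) := by
            rw [inv_smul_smul₀ hγ1ne]
        _ = (γ (k+1))⁻¹ • (α k • (μ • (y k - v k) - g)) := by rw [hvrec k]
        _ = (α k / γ (k+1)) • (μ • (y k - v k) - g) := by
            rw [smul_smul, div_eq_inv_mul]
    have hvnew : v (k+1) - xstar = (v k - xstar) + (α k / γ (k+1)) • (μ • (y k - v k) - g) := by
      rw [← hvstep]; abel
    have huip : ⟪v k - xstar, μ • (y k - v k) - g⟫ = μ * R - B := by
      rw [hR, hB, inner_sub_right, real_inner_smul_right,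
        real_inner_comm (y k - v k) (v k - xstar), real_inner_comm g (v k - xstar)]
    have hunorm : ‖μ • (y k - v k) - g‖^2 = μ^2*P - 2*μ*A + N := by
      rw [norm_sub_sq_real, real_inner_smul_left, norm_smul]
      rw [hA, hPdef, hN, real_inner_comm]
      simp [abs_of_nonneg hμ, mul_pow]
      ring
    have hQ' : ‖v (k+1) - xstar‖^2 = Q + (2*(α k)/γ (k+1))*(μ*R - B)
        + ((α k)/γ (k+1))^2*(μ^2*P - 2*μ*A + N) := by
      rw [hvnew, norm_add_sq_real, real_inner_smul_right, huip, norm_smul, mul_pow,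
        Real.norm_eq_abs, sq_abs, hunorm, hQdef]
      ring
    -- h2 : strong convexity at xstar, y k
    have hysplit : y k - xstar = (y k - v k) + (v k - xstar) := by abel
    have hip2 : ⟪g, xstar - y k⟫ = -(A + B) := by
      have : xstar - y k = -((y k - v k) + (v k - xstar)) := by abel
      rw [this, inner_neg_right, inner_add_right, hA, hB]
    have hnrm2 : ‖xstar - y k‖^2 = P + 2*R + Q := by
      rw [norm_sub_rev, hysplit, norm_add_sq_real, hPdef, hQdef, hR]
    have h2 : f xstar - f (y k) + (A + B) ≥ μ/2 * (P + 2*R + Q) := by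
      have h := hconv xstar (y k)
      rw [hip2, hnrm2] at h
      linarith
    -- h3 : convexity at x k, y k plus the y-recursion
    have hC : L * α k * ⟪g, x k - y k⟫ = γ k * A := by
      have hinner := congrArg (fun w => ⟪g, w⟫) (hyrec k)
      simp only [real_inner_smul_right] at hinner
      have hyx : ⟪g, y k - x k⟫ = -⟪g, x k - y k⟫ := by
        rw [← inner_neg_right]; congr 1; abel
      have hvy : ⟪g, v k - y k⟫ = -A - B + B := by
        have : v k - y k = -(y k - v k) := by abel
        rw [this, inner_neg_right, hA]; ring
      rw [hyx, hvy] at hinner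
      have hγ1 : γ (k+1) = L * (α k)^2 := by rw [hγrec k, ← hstep k]
      rw [hγ1] at hinner
      have hαne : α k ≠ 0 := ne_of_gt hα0
      have : α k * (L * α k * ⟪g, x k - y k⟫) = α k * (γ k * A) := by ring_nf; ring_nf at hinner; linarith
      exact mul_left_cancel₀ hαne this
    have h3 : L * α k * (f (x k) - f (y k)) ≥ γ k * A := by
      have h := hconv (x k) (y k)
      have hμterm : 0 ≤ μ/2 * ‖x k - y k‖^2 := by positivity
      have hfxy : f (x k) - f (y k) ≥ ⟪g, x k - y k⟫ := by linarith
      calc γ k * A = L * α k * ⟪g, x k - y k⟫ := hC.symm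
        _ ≤ L * α k * (f (x k) - f (y k)) := by
            apply mul_le_mul_of_nonneg_left hfxy (by positivity)
    -- apply the scalar lemma
    have key := aux_contr μ L (γ k) (α k) (f (y k)) (f xstar) (f (x k)) (f (x (k+1)))
      A B N P Q R hμ hL (hγpos k) hα0 hα1 (hstep k) (hxrec k) h2 h3 (by positivity)
    simp only [hLya]
    rw [hγrec k] at hQ' ⊢
    rw [hQ']
    calc f (x (k+1)) - f xstar + ((1 - α k) * γ k + μ * α k) / 2 *
          (Q + 2 * α k / ((1 - α k) * γ k + μ * α k) * (μ * R - B) +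
            (α k / ((1 - α k) * γ k + μ * α k)) ^ 2 * (μ ^ 2 * P - 2 * μ * A + N))
        ≤ (1 - α k) * (f (x k) - f xstar) + (1 - α k) * γ k / 2 * Q := key
      _ = (1 - α k) * (f (x k) - f xstar + γ k / 2 * Q) := by ring
  -- product of rates
  set lam : ℕ → ℝ := fun k => ∏ i ∈ Finset.range k, (1 - α i) with hlam
  have hlam0 : lam 0 = 1 := by simp [hlam]
  have hlamsucc : ∀ k, lam (k+1) = lam k * (1 - α k) := fun k => Finset.prod_range_succ _ k
  have hfacpos : ∀ i, 0 < 1 - α i := fun i => by linarith [(hα i).2]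
  have hlampos : ∀ k, 0 < lam k := fun k => Finset.prod_pos (fun i _ => hfacpos i)
  have hLyaB : ∀ k, Lya k ≤ lam k * Lya 0 := by
    intro k
    induction k with
    | zero => rw [hlam0, one_mul]
    | succ n ih =>
      calc Lya (n+1) ≤ (1 - α n) * Lya n := hcontr n
        _ ≤ (1 - α n) * (lam n * Lya 0) := mul_le_mul_of_nonneg_left ih (hfacpos n).le
        _ = lam (n+1) * Lya 0 := by rw [hlamsucc]; ring
  have hγlam : ∀ k, lam k * γ 0 ≤ γ k := by
    intro k
    induction k with
    | zero => rw [hlam0, one_mul]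
    | succ n ih =>
      rw [hγrec n, hlamsucc n]
      have h1 : (1-α n) * (lam n * γ 0) ≤ (1-α n) * γ n :=
        mul_le_mul_of_nonneg_left ih (hfacpos n).le
      nlinarith [(hα n).1, hμ]
  have hγ1eq : ∀ k, γ (k+1) = L * α k ^ 2 := fun k => by rw [hγrec k, ← hstep k]
  have hαge : ∀ (k : ℕ) (t : ℝ), t ≤ γ (k+1) → Real.sqrt (t/L) ≤ α k := by
    intro k t ht
    have h1 : Real.sqrt (t/L) ≤ Real.sqrt (γ (k+1)/L) :=
      Real.sqrt_le_sqrt (by gcongr)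
    have h2 : γ (k+1)/L = (α k)^2 := by rw [hγ1eq k]; field_simp
    rw [h2, Real.sqrt_sq (hα k).1.le] at h1
    exact h1
  have hs : 0 < Real.sqrt L := Real.sqrt_pos.2 hL
  have hr : 0 < Real.sqrt (γ 0) := Real.sqrt_pos.2 hγ0
  have hsq : ∀ k : ℕ, Real.sqrt (lam k) * (2*Real.sqrt L + (k:ℝ)*Real.sqrt (γ 0)) ≤ 2*Real.sqrt L := by
    intro k
    induction k with
    | zero => simp [hlam0]
    | succ n ih =>
      have hb' : (0:ℝ) ≤ Real.sqrt (lam (n+1)) := Real.sqrt_nonneg _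
      have hlamdec : lam (n+1) ≤ lam n := by
        rw [hlamsucc]
        nlinarith [hlampos n, (hα n).1]
      have hbb' : Real.sqrt (lam (n+1)) ≤ Real.sqrt (lam n) := Real.sqrt_le_sqrt hlamdec
      have halow : Real.sqrt (lam (n+1)) * Real.sqrt (γ 0) ≤ α n * Real.sqrt L := by
        have h1 : lam (n+1) * γ 0 ≤ γ (n+1) := hγlam (n+1)
        have h2 := hαge n (lam (n+1) * γ 0) h1
        have hxnn : (0:ℝ) ≤ lam (n+1) * γ 0 / L :=
          div_nonneg (mul_nonneg (hlampos (n+1)).le hγ0.le) hL.le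
        have h3 : Real.sqrt (lam (n+1) * γ 0 / L) * Real.sqrt L
            = Real.sqrt (lam (n+1)) * Real.sqrt (γ 0) := by
          rw [← Real.sqrt_mul hxnn L, div_mul_cancel₀ _ (ne_of_gt hL),
            Real.sqrt_mul (hlampos (n+1)).le]
        calc Real.sqrt (lam (n+1)) * Real.sqrt (γ 0)
            = Real.sqrt (lam (n+1) * γ 0 / L) * Real.sqrt L := h3.symm
          _ ≤ α n * Real.sqrt L := mul_le_mul_of_nonneg_right h2 hs.le
      have h2' : (Real.sqrt (lam (n+1)))^2 * Real.sqrt L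
          ≤ (Real.sqrt L - Real.sqrt (lam (n+1)) * Real.sqrt (γ 0)) * (Real.sqrt (lam n))^2 := by
        have e : (Real.sqrt (lam (n+1)))^2 = lam n * (1 - α n) := by
          rw [Real.sq_sqrt (hlampos (n+1)).le, hlamsucc n]
        rw [e, Real.sq_sqrt (hlampos n).le]
        have hstep2 : (1 - α n) * Real.sqrt L
            ≤ Real.sqrt L - Real.sqrt (lam (n+1)) * Real.sqrt (γ 0) := by nlinarith [halow]
        calc lam n * (1 - α n) * Real.sqrt L = ((1 - α n) * Real.sqrt L) * lam n := by ring
          _ ≤ (Real.sqrt L - Real.sqrt (lam (n+1)) * Real.sqrt (γ 0)) * lam n :=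
              mul_le_mul_of_nonneg_right hstep2 (hlampos n).le
      have hfin := aux_rate (Real.sqrt (lam n)) (Real.sqrt (lam (n+1))) (Real.sqrt L)
        (Real.sqrt (γ 0)) (n:ℝ) hb' hs hr (Nat.cast_nonneg n) ih h2' hbb'
      push_cast
      convert hfin using 3
  have hlamB1 : ∀ k : ℕ, lam k * (Real.sqrt (γ 0) * (k:ℝ) + 2*Real.sqrt L)^2 ≤ 4*L := by
    intro k
    have h := hsq k
    have hnn : 0 ≤ Real.sqrt (lam k) * (2*Real.sqrt L + (k:ℝ)*Real.sqrt (γ 0)) := by positivity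
    calc lam k * (Real.sqrt (γ 0) * (k:ℝ) + 2*Real.sqrt L)^2
        = (Real.sqrt (lam k) * (2*Real.sqrt L + (k:ℝ)*Real.sqrt (γ 0)))^2 := by
          rw [mul_pow, Real.sq_sqrt (hlampos k).le]; ring
      _ ≤ (2*Real.sqrt L)^2 := pow_le_pow_left₀ hnn h 2
      _ = 4*L := by rw [mul_pow, Real.sq_sqrt hL.le]; norm_num
  set m : ℝ := min (γ 1) μ with hm
  have hm0 : 0 ≤ m := le_min (hγpos 1).le hμ
  have hγgem : ∀ k, m ≤ γ (k+1) := by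
    intro k
    induction k with
    | zero => exact min_le_left _ _
    | succ n ih =>
      rw [hγrec (n+1)]
      have hmμ2 : m ≤ μ := min_le_right _ _
      nlinarith [(hα (n+1)).1, (hα (n+1)).2]
  have hαm : ∀ k, Real.sqrt (m/L) ≤ α k := fun k => hαge k m (hγgem k)
  have hlamB2 : ∀ k, lam k ≤ (1 - Real.sqrt (m/L))^k := by
    intro k
    calc lam k ≤ ∏ _i ∈ Finset.range k, (1 - Real.sqrt (m/L)) :=
        Finset.prod_le_prod (fun i _ => (hfacpos i).le) (fun i _ => by linarith [hαm i])
      _ = (1 - Real.sqrt (m/L))^k := by rw [Finset.prod_const, Finset.card_range]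
  constructor
  · -- Part 1
    intro k
    have hB1pos : (0:ℝ) < (Real.sqrt (γ 0) * (k:ℝ) + 2*Real.sqrt L)^2 := by positivity
    have hb1 : Lya k ≤ Lya 0 * (4*L/(Real.sqrt (γ 0) * (k:ℝ) + 2*Real.sqrt L)^2) := by
      calc Lya k ≤ lam k * Lya 0 := hLyaB k
        _ ≤ (4*L/(Real.sqrt (γ 0) * (k:ℝ) + 2*Real.sqrt L)^2) * Lya 0 :=
            mul_le_mul_of_nonneg_right ((le_div_iff₀ hB1pos).2 (hlamB1 k)) (hLyapos 0)
        _ = Lya 0 * (4*L/(Real.sqrt (γ 0) * (k:ℝ) + 2*Real.sqrt L)^2) := mul_comm _ _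
    have hb2 : Lya k ≤ Lya 0 * (1 - Real.sqrt (m/L))^k := by
      calc Lya k ≤ lam k * Lya 0 := hLyaB k
        _ ≤ (1 - Real.sqrt (m/L))^k * Lya 0 :=
            mul_le_mul_of_nonneg_right (hlamB2 k) (hLyapos 0)
        _ = Lya 0 * (1 - Real.sqrt (m/L))^k := mul_comm _ _
    rcases le_total (4*L/(Real.sqrt (γ 0) * (k:ℝ) + 2*Real.sqrt L)^2) ((1 - Real.sqrt (m/L))^k) with hmin1 | hmin1
    · rw [min_eq_left hmin1]; exact hb1
    · rw [min_eq_right hmin1]; exact hb2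
  · -- Part 2
    intro hγ0L k hk
    obtain ⟨j, rfl⟩ : ∃ j, k = j + 1 := ⟨k - 1, (Nat.succ_pred_eq_of_pos hk).symm⟩
    have hγ1μ : μ ≤ γ 1 := by
      rw [hγrec 0]
      nlinarith [(hα 0).1, (hα 0).2]
    have hmeq : m = μ := min_eq_right hγ1μ
    have hαμ : ∀ i, Real.sqrt (μ/L) ≤ α i := by
      intro i
      have := hαm i
      rwa [hmeq] at this
    have hf0 : 0 ≤ f (x 0) - f xstar := sub_nonneg.2 (hmin _)
    have hD : 0 ≤ ‖v 0 - xstar‖^2 := sq_nonneg _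
    have hLya0eq : Lya 0 = f (x 0) - f xstar + γ 0/2 * ‖v 0 - xstar‖^2 := rfl
    have hCL : (1 - α 0) * Lya 0 ≤ f (x 0) - f xstar + L/2 * ‖v 0 - xstar‖^2 := by
      have h1 : (1 - α 0) * γ 0 ≤ L := by nlinarith [hstep 0, (hα 0).1, (hα 0).2, hμ, hL, sq_nonneg (α 0), sq_nonneg (1 - α 0)]
      rw [hLya0eq]
      nlinarith [(hα 0).1, (hα 0).2]
    have hk2 : (0:ℝ) < ((j:ℝ)+1)^2 := by positivity
    -- bound (a)
    have ha : Lya (j+1) ≤ (f (x 0) - f xstar + L/2 * ‖v 0 - xstar‖^2) * (4/((j:ℝ)+1)^2) := by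
      have e1 : γ 0 * ((j:ℝ)+1)^2 ≤ (Real.sqrt (γ 0) * ((j:ℝ)+1) + 2*Real.sqrt L)^2 := by
        have h1 : Real.sqrt (γ 0)^2 = γ 0 := Real.sq_sqrt hγ0.le
        have h2 : (0:ℝ) ≤ Real.sqrt (γ 0) * ((j:ℝ)+1) := by positivity
        nlinarith [mul_nonneg h2 hs.le]
      have E : lam (j+1) * (γ 0 * ((j:ℝ)+1)^2) ≤ 4*L := by
        have := hlamB1 (j+1)
        push_cast at this
        nlinarith [mul_le_mul_of_nonneg_left e1 (hlampos (j+1)).le]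
      have hLb : Lya (j+1) ≤ lam (j+1) * (f (x 0) - f xstar + γ 0/2 * ‖v 0 - xstar‖^2) := by
        rw [← hLya0eq]; exact hLyaB (j+1)
      rw [show (f (x 0) - f xstar + L/2 * ‖v 0 - xstar‖^2) * (4/((j:ℝ)+1)^2)
        = (f (x 0) - f xstar + L/2 * ‖v 0 - xstar‖^2) * 4 / ((j:ℝ)+1)^2 by ring,
        le_div_iff₀ hk2]
      exact aux_part2a (lam (j+1)) (Lya (j+1)) (f (x 0) - f xstar) (‖v 0 - xstar‖^2)
        (γ 0) L (((j:ℝ)+1)^2) (hlampos (j+1)).le hf0 hD hγ0 hL hγ0L hk2 hLb E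
    -- bound (b)
    have hsqrtμ1 : Real.sqrt (μ/L) ≤ 1 := by
      rw [show (1:ℝ) = Real.sqrt 1 from Real.sqrt_one.symm]
      exact Real.sqrt_le_sqrt (by rw [div_le_one hL]; exact hμL)
    have hBnn : (0:ℝ) ≤ 1 - Real.sqrt (μ/L) := by linarith
    have hb : Lya (j+1) ≤ (f (x 0) - f xstar + L/2 * ‖v 0 - xstar‖^2) * (1 - Real.sqrt (μ/L))^j := by
      have hsplit : lam (j+1) = (∏ i ∈ Finset.range j, (1 - α (i+1))) * (1 - α 0) :=
        Finset.prod_range_succ' _ j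
      have hprod : ∏ i ∈ Finset.range j, (1 - α (i+1)) ≤ (1 - Real.sqrt (μ/L))^j := by
        calc (∏ i ∈ Finset.range j, (1 - α (i+1)))
            ≤ ∏ _i ∈ Finset.range j, (1 - Real.sqrt (μ/L)) :=
              Finset.prod_le_prod (fun i _ => (hfacpos (i+1)).le)
                (fun i _ => by linarith [hαμ (i+1)])
          _ = (1 - Real.sqrt (μ/L))^j := by rw [Finset.prod_const, Finset.card_range]
      have hprodnn : (0:ℝ) ≤ ∏ i ∈ Finset.range j, (1 - α (i+1)) :=
        Finset.prod_nonneg (fun i _ => (hfacpos (i+1)).le)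
      have hCLnn : 0 ≤ (1 - α 0) * Lya 0 :=
        mul_nonneg (hfacpos 0).le (hLyapos 0)
      calc Lya (j+1) ≤ lam (j+1) * Lya 0 := hLyaB (j+1)
        _ = (∏ i ∈ Finset.range j, (1 - α (i+1))) * ((1 - α 0) * Lya 0) := by
            rw [hsplit]; ring
        _ ≤ (1 - Real.sqrt (μ/L))^j * ((1 - α 0) * Lya 0) :=
            mul_le_mul_of_nonneg_right hprod hCLnn
        _ ≤ (1 - Real.sqrt (μ/L))^j * (f (x 0) - f xstar + L/2 * ‖v 0 - xstar‖^2) :=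
            mul_le_mul_of_nonneg_left hCL (pow_nonneg hBnn j)
        _ = (f (x 0) - f xstar + L/2 * ‖v 0 - xstar‖^2) * (1 - Real.sqrt (μ/L))^j :=
            mul_comm _ _
    have hj1 : (j + 1) - 1 = j := rfl
    rw [hj1]
    push_cast
    rcases le_total (4/((j:ℝ)+1)^2) ((1 - Real.sqrt (μ/L))^j) with hmin1 | hmin1
    · rw [min_eq_left hmin1]
      convert ha using 2
    · rw [min_eq_right hmin1]
      exact hb
end
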